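/- arXiv:2412.19805 — 12 statements merged into one kernel-verified Lean document; each statement's English description precedes it below -/
import Mathlib

section
/- If R is a concrete branching reactive bisimulation, R(P,X,Q), P has no outgoing tau-transition, and Q ==> Q' (a finite sequence of tau-transitions), then R(P,X,Q'). -/
inductive Act (A : Type) where
  | vis (a : A)
  | tau
  | to

def TauPath {S A : Type} (Tr : S → Act A → S → Prop) : S → S → Prop :=
  Relation.ReflTransGen (fun p q => Tr p Act.tau q)

def OptStep {S A : Type} (Tr : S → Act A → S → Prop) (α : Act A) (p q : S) : Prop :=
  (α = Act.tau ∧ p = q) ∨ Tr p α q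

def Stable {S A : Type} (Tr : S → Act A → S → Prop) (p : S) : Prop :=
  ¬ ∃ p', Tr p Act.tau p'

def Idle {S A : Type} (Tr : S → Act A → S → Prop) (p : S) (X : Set A) : Prop :=
  Stable Tr p ∧ ∀ a ∈ X, ¬ ∃ p', Tr p (Act.vis a) p'

def InitSet {S A : Type} (Tr : S → Act A → S → Prop) (p : S) : Set (Act A) :=
  {α | α ≠ Act.to ∧ ∃ p', Tr p α p'}

structure CBRB {S A : Type} (Tr : S → Act A → S → Prop)
    (Rp : S → S → Prop) (Rt : S → Set A → S → Prop) : Prop where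
  symm_p : ∀ {P Q}, Rp P Q → Rp Q P
  symm_t : ∀ {P X Q}, Rt P X Q → Rt Q X P
  c1a : ∀ {P Q α P'}, Rp P Q → α ≠ Act.to → Tr P α P' →
    ∃ Q1 Q2, TauPath Tr Q Q1 ∧ OptStep Tr α Q1 Q2 ∧ Rp P Q1 ∧ Rp P' Q2
  c1b : ∀ {P Q} (Y : Set A), Rp P Q → Rt P Y Q
  c2a : ∀ {P X Q P'}, Rt P X Q → Tr P Act.tau P' →
    ∃ Q1 Q2, TauPath Tr Q Q1 ∧ OptStep Tr Act.tau Q1 Q2 ∧ Rt P X Q1 ∧ Rt P' X Q2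
  c2b : ∀ {P X Q a P'}, Rt P X Q → a ∈ X → Tr P (Act.vis a) P' →
    ∃ Q1 Q2, TauPath Tr Q Q1 ∧ Tr Q1 (Act.vis a) Q2 ∧ Rt P X Q1 ∧ Rp P' Q2
  c2c : ∀ {P X Q}, Rt P X Q → Idle Tr P X → ∃ Q0, TauPath Tr Q Q0 ∧ Rp P Q0
  c2d : ∀ {P X Q P'}, Rt P X Q → Idle Tr P X → Tr P Act.to P' →
    ∃ Q1 Q2, TauPath Tr Q Q1 ∧ Tr Q1 Act.to Q2 ∧ Rt P' X Q2
  c2e : ∀ {P X Q}, Rt P X Q → Stable Tr P → ∃ Q0, TauPath Tr Q Q0 ∧ Stable Tr Q0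

def Bis {S A : Type} (Tr : S → Act A → S → Prop) (P Q : S) : Prop :=
  ∃ Rp Rt, CBRB Tr Rp Rt ∧ Rp P Q

def BisX {S A : Type} (Tr : S → Act A → S → Prop) (P : S) (X : Set A) (Q : S) : Prop :=
  ∃ Rp Rt, CBRB Tr Rp Rt ∧ Rt P X Q

/-- If `R` is a concrete branching reactive bisimulation, `R(P,X,Q)`, `P` has no outgoing
tau-transition, and `Q ==> Q'`, then `R(P,X,Q')`. -/
theorem stmt0 {C A : Type} (Tr : C → Act A → C → Prop)
    (Rp : C → C → Prop) (Rt : C → Set A → C → Prop)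
    (h : CBRB Tr Rp Rt) (P : C) (X : Set A) (Q Q' : C)
    (hR : Rt P X Q) (hP : Stable Tr P) (hQ : TauPath Tr Q Q') :
    Rt P X Q' := by
  induction hQ with
  | refl => exact hR
  | tail hpath hstep ih =>
    rename_i b c
    obtain ⟨P1, P2, hPP1, hOpt, _, hRc⟩ := h.c2a (h.symm_t ih) hstep
    have hP1 : P1 = P := by
      cases hPP1.cases_head with
      | inl h' => exact h'.symm
      | inr h' => exact absurd ⟨_, h'.choose_spec.1⟩ hP
    have hP2 : P2 = P := by
      rcases hOpt with ⟨_, rfl⟩ | h'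
      · exact hP1
      · rw [hP1] at h'; exact absurd ⟨_, h'⟩ hP
    rw [hP2] at hRc
    exact h.symm_t hRc
end

section
/- If R is a concrete branching reactive bisimulation with R(P,X,Q) and I(P) ∩ (X ∪ {tau}) = ∅, then there is a path Q ==> Q0 such that R(P,Q0), Q0 has no outgoing tau-transition, and I(Q0) = I(P). -/
lemma taupath_stable {C A : Type} {Tr : C → Act A → C → Prop} {p q : C}
    (hs : Stable Tr p) (hp : TauPath Tr p q) : p = q := by
  rcases (Relation.ReflTransGen.cases_head hp) with h | ⟨c, hc, _⟩
  · exact h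
  · exact absurd ⟨c, hc⟩ hs

lemma rp_tau_stable {C A : Type} {Tr : C → Act A → C → Prop}
    {Rp : C → C → Prop} {Rt : C → Set A → C → Prop}
    (h : CBRB Tr Rp Rt) {P Q Q' : C} (hs : Stable Tr P)
    (hR : Rp P Q) (hq : TauPath Tr Q Q') : Rp P Q' := by
  induction hq with
  | refl => exact hR
  | tail _ hstep ih =>
    rcases h.c1a (h.symm_p ih) (by simp) hstep with ⟨P1, P2, hpath, hopt, _, hR2⟩
    have e1 := taupath_stable hs hpath
    rcases hopt with ⟨_, e2⟩ | htr
    · exact h.symm_p ((e1.trans e2).symm ▸ hR2)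
    · exact absurd ⟨P2, e1 ▸ htr⟩ hs

/-- If `R(P,X,Q)` and `I(P) ∩ (X ∪ {tau}) = ∅`, then there is a path `Q ==> Q0` with
`R(P,Q0)`, `Q0` stable and `I(Q0) = I(P)`. -/
theorem stmt3 {C A : Type} (Tr : C → Act A → C → Prop)
    (Rp : C → C → Prop) (Rt : C → Set A → C → Prop)
    (h : CBRB Tr Rp Rt) (P : C) (X : Set A) (Q : C)
    (hR : Rt P X Q) (hP : Idle Tr P X) :
    ∃ Q0, TauPath Tr Q Q0 ∧ Rp P Q0 ∧ Stable Tr Q0 ∧ InitSet Tr Q0 = InitSet Tr P := by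
  have hPs := hP.1
  obtain ⟨Q1, hQQ1, hRp1⟩ := h.c2c hR hP
  obtain ⟨Q0, hQ1Q0, hQ0s⟩ := h.c2e (h.c1b ∅ hRp1) hPs
  have hRp0 : Rp P Q0 := rp_tau_stable h hPs hRp1 hQ1Q0
  refine ⟨Q0, hQQ1.trans hQ1Q0, hRp0, hQ0s, ?_⟩
  ext α
  constructor
  · rintro ⟨hne, Q', hTr⟩
    have hαtau : α ≠ Act.tau := fun e => hQ0s ⟨Q', e ▸ hTr⟩
    rcases h.c1a (h.symm_p hRp0) hne hTr with ⟨P1, P2, hpath, hopt, _, _⟩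
    have e1 := taupath_stable hPs hpath
    rcases hopt with ⟨e, _⟩ | htr
    · exact absurd e hαtau
    · exact ⟨hne, P2, e1 ▸ htr⟩
  · rintro ⟨hne, P', hTr⟩
    have hαtau : α ≠ Act.tau := fun e => hPs ⟨P', e ▸ hTr⟩
    rcases h.c1a hRp0 hne hTr with ⟨Q1', Q2, hpath, hopt, _, _⟩
    have e1 := taupath_stable hQ0s hpath
    rcases hopt with ⟨e, _⟩ | htr
    · exact absurd e hαtau
    · exact ⟨hne, Q2, e1 ▸ htr⟩
end

section
/- Stuttering Lemma: Let P, P†, P‡, Q be processes. If P and P‡ are both concrete branching reactive bisimilar to Q (respectively both concrete branching X-bisimilar to Q) and P -tau-> P† -tau-> P‡, then P† is concrete branching reactive bisimilar to Q (respectively concrete branching X-bisimilar to Q). -/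
section Aux

variable {C A : Type} {Tr : C → Act A → C → Prop} {Rp : C → C → Prop}
  {Rt : C → Set A → C → Prop}

lemma optTau {q1 q2 : C} (h : OptStep Tr Act.tau q1 q2) : TauPath Tr q1 q2 := by
  rcases h with ⟨_, rfl⟩ | h
  · exact Relation.ReflTransGen.refl
  · exact Relation.ReflTransGen.single h

lemma simPathP (h : CBRB Tr Rp Rt) {P P' Q : C} (hr : Rp P Q) (hp : TauPath Tr P P') :
    ∃ Q', TauPath Tr Q Q' ∧ Rp P' Q' := by
  induction hp with
  | refl => exact ⟨Q, Relation.ReflTransGen.refl, hr⟩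
  | tail _ step ih =>
    obtain ⟨Q1, pq, hrc⟩ := ih
    obtain ⟨Q1', Q2', path, ostep, _, hr'⟩ := h.c1a hrc (show (Act.tau : Act A) ≠ Act.to by rintro ⟨⟩) step
    exact ⟨Q2', (pq.trans path).trans (optTau ostep), hr'⟩

lemma simPathT (h : CBRB Tr Rp Rt) {P P' Q : C} {X : Set A} (hr : Rt P X Q)
    (hp : TauPath Tr P P') : ∃ Q', TauPath Tr Q Q' ∧ Rt P' X Q' := by
  induction hp with
  | refl => exact ⟨Q, Relation.ReflTransGen.refl, hr⟩
  | tail _ step ih =>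
    obtain ⟨Q1, pq, hrc⟩ := ih
    obtain ⟨Q1', Q2', path, ostep, _, hr'⟩ := h.c2a hrc step
    exact ⟨Q2', (pq.trans path).trans (optTau ostep), hr'⟩

/-- pairs added by the stuttering cbrbClosure -/
def ExP (Tr : C → Act A → C → Prop) (Rp : C → C → Prop) (Pd Q : C) : Prop :=
  ∃ P Pdd, TauPath Tr P Pd ∧ TauPath Tr Pd Pdd ∧ Rp P Q ∧ Rp Pdd Q

/-- triples added by the stuttering cbrbClosure -/
def ExT (Tr : C → Act A → C → Prop) (Rt : C → Set A → C → Prop)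
    (Pd : C) (X : Set A) (Q : C) : Prop :=
  ∃ P Pdd, TauPath Tr P Pd ∧ TauPath Tr Pd Pdd ∧ Rt P X Q ∧ Rt Pdd X Q

lemma cbrbClosure (h : CBRB Tr Rp Rt) :
    CBRB Tr (fun p q => Rp p q ∨ ExP Tr Rp p q ∨ ExP Tr Rp q p)
            (fun p X q => Rt p X q ∨ ExT Tr Rt p X q ∨ ExT Tr Rt q X p) where
  symm_p := by
    rintro P Q (h1 | h1 | h1)
    exacts [Or.inl (h.symm_p h1), Or.inr (Or.inr h1), Or.inr (Or.inl h1)]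
  symm_t := by
    rintro P X Q (h1 | h1 | h1)
    exacts [Or.inl (h.symm_t h1), Or.inr (Or.inr h1), Or.inr (Or.inl h1)]
  c1a := by
    rintro P Q α P' (hr | ⟨p, pdd, pa1, pa2, r1, r2⟩ | ⟨q, qdd, pa1, pa2, r1, r2⟩) hα hTr
    · obtain ⟨Q1, Q2, a, b, c, d⟩ := h.c1a hr hα hTr
      exact ⟨Q1, Q2, a, b, Or.inl c, Or.inl d⟩
    · obtain ⟨Qm, pq, hrP⟩ := simPathP h r1 pa1
      obtain ⟨Q1, Q2, a, b, c, d⟩ := h.c1a hrP hα hTr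
      exact ⟨Q1, Q2, pq.trans a, b, Or.inl c, Or.inl d⟩
    · obtain ⟨Q1, Q2, a, b, c, d⟩ := h.c1a (h.symm_p r2) hα hTr
      exact ⟨Q1, Q2, pa2.trans a, b, Or.inl c, Or.inl d⟩
  c1b := by
    rintro P Q Y (hr | ⟨p, pdd, pa1, pa2, r1, r2⟩ | ⟨q, qdd, pa1, pa2, r1, r2⟩)
    exacts [Or.inl (h.c1b Y hr),
      Or.inr (Or.inl ⟨p, pdd, pa1, pa2, h.c1b Y r1, h.c1b Y r2⟩),
      Or.inr (Or.inr ⟨q, qdd, pa1, pa2, h.c1b Y r1, h.c1b Y r2⟩)]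
  c2a := by
    rintro P X Q P' (hr | ⟨p, pdd, pa1, pa2, r1, r2⟩ | ⟨q, qdd, pa1, pa2, r1, r2⟩) hTr
    · obtain ⟨Q1, Q2, a, b, c, d⟩ := h.c2a hr hTr
      exact ⟨Q1, Q2, a, b, Or.inl c, Or.inl d⟩
    · obtain ⟨Qm, pq, hrP⟩ := simPathT h r1 pa1
      obtain ⟨Q1, Q2, a, b, c, d⟩ := h.c2a hrP hTr
      exact ⟨Q1, Q2, pq.trans a, b, Or.inl c, Or.inl d⟩
    · obtain ⟨Q1, Q2, a, b, c, d⟩ := h.c2a (h.symm_t r2) hTr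
      exact ⟨Q1, Q2, pa2.trans a, b, Or.inl c, Or.inl d⟩
  c2b := by
    rintro P X Q a' P' (hr | ⟨p, pdd, pa1, pa2, r1, r2⟩ | ⟨q, qdd, pa1, pa2, r1, r2⟩) ha hTr
    · obtain ⟨Q1, Q2, a, b, c, d⟩ := h.c2b hr ha hTr
      exact ⟨Q1, Q2, a, b, Or.inl c, Or.inl d⟩
    · obtain ⟨Qm, pq, hrP⟩ := simPathT h r1 pa1
      obtain ⟨Q1, Q2, a, b, c, d⟩ := h.c2b hrP ha hTr
      exact ⟨Q1, Q2, pq.trans a, b, Or.inl c, Or.inl d⟩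
    · obtain ⟨Q1, Q2, a, b, c, d⟩ := h.c2b (h.symm_t r2) ha hTr
      exact ⟨Q1, Q2, pa2.trans a, b, Or.inl c, Or.inl d⟩
  c2c := by
    rintro P X Q (hr | ⟨p, pdd, pa1, pa2, r1, r2⟩ | ⟨q, qdd, pa1, pa2, r1, r2⟩) hI
    · obtain ⟨Q0, a, b⟩ := h.c2c hr hI
      exact ⟨Q0, a, Or.inl b⟩
    · obtain ⟨Qm, pq, hrP⟩ := simPathT h r1 pa1
      obtain ⟨Q0, a, b⟩ := h.c2c hrP hI
      exact ⟨Q0, pq.trans a, Or.inl b⟩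
    · obtain ⟨Q0, a, b⟩ := h.c2c (h.symm_t r2) hI
      exact ⟨Q0, pa2.trans a, Or.inl b⟩
  c2d := by
    rintro P X Q P' (hr | ⟨p, pdd, pa1, pa2, r1, r2⟩ | ⟨q, qdd, pa1, pa2, r1, r2⟩) hI hTr
    · obtain ⟨Q1, Q2, a, b, c⟩ := h.c2d hr hI hTr
      exact ⟨Q1, Q2, a, b, Or.inl c⟩
    · obtain ⟨Qm, pq, hrP⟩ := simPathT h r1 pa1
      obtain ⟨Q1, Q2, a, b, c⟩ := h.c2d hrP hI hTr
      exact ⟨Q1, Q2, pq.trans a, b, Or.inl c⟩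
    · obtain ⟨Q1, Q2, a, b, c⟩ := h.c2d (h.symm_t r2) hI hTr
      exact ⟨Q1, Q2, pa2.trans a, b, Or.inl c⟩
  c2e := by
    rintro P X Q (hr | ⟨p, pdd, pa1, pa2, r1, r2⟩ | ⟨q, qdd, pa1, pa2, r1, r2⟩) hS
    · exact h.c2e hr hS
    · obtain ⟨Qm, pq, hrP⟩ := simPathT h r1 pa1
      obtain ⟨Q0, a, b⟩ := h.c2e hrP hS
      exact ⟨Q0, pq.trans a, b⟩
    · obtain ⟨Q0, a, b⟩ := h.c2e (h.symm_t r2) hS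
      exact ⟨Q0, pa2.trans a, b⟩

lemma CBRB.union {Rp1 Rt1 Rp2 Rt2} (h1 : CBRB Tr Rp1 Rt1) (h2 : CBRB Tr Rp2 Rt2) :
    CBRB Tr (fun p q => Rp1 p q ∨ Rp2 p q) (fun p X q => Rt1 p X q ∨ Rt2 p X q) where
  symm_p := by rintro P Q (hr | hr)
               exacts [Or.inl (h1.symm_p hr), Or.inr (h2.symm_p hr)]
  symm_t := by rintro P X Q (hr | hr)
               exacts [Or.inl (h1.symm_t hr), Or.inr (h2.symm_t hr)]
  c1a := by
    rintro P Q α P' (hr | hr) hα hTr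
    · obtain ⟨Q1, Q2, a, b, c, d⟩ := h1.c1a hr hα hTr
      exact ⟨Q1, Q2, a, b, Or.inl c, Or.inl d⟩
    · obtain ⟨Q1, Q2, a, b, c, d⟩ := h2.c1a hr hα hTr
      exact ⟨Q1, Q2, a, b, Or.inr c, Or.inr d⟩
  c1b := by
    rintro P Q Y (hr | hr)
    exacts [Or.inl (h1.c1b Y hr), Or.inr (h2.c1b Y hr)]
  c2a := by
    rintro P X Q P' (hr | hr) hTr
    · obtain ⟨Q1, Q2, a, b, c, d⟩ := h1.c2a hr hTr
      exact ⟨Q1, Q2, a, b, Or.inl c, Or.inl d⟩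
    · obtain ⟨Q1, Q2, a, b, c, d⟩ := h2.c2a hr hTr
      exact ⟨Q1, Q2, a, b, Or.inr c, Or.inr d⟩
  c2b := by
    rintro P X Q a' P' (hr | hr) ha hTr
    · obtain ⟨Q1, Q2, a, b, c, d⟩ := h1.c2b hr ha hTr
      exact ⟨Q1, Q2, a, b, Or.inl c, Or.inl d⟩
    · obtain ⟨Q1, Q2, a, b, c, d⟩ := h2.c2b hr ha hTr
      exact ⟨Q1, Q2, a, b, Or.inr c, Or.inr d⟩
  c2c := by
    rintro P X Q (hr | hr) hI
    · obtain ⟨Q0, a, b⟩ := h1.c2c hr hI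
      exact ⟨Q0, a, Or.inl b⟩
    · obtain ⟨Q0, a, b⟩ := h2.c2c hr hI
      exact ⟨Q0, a, Or.inr b⟩
  c2d := by
    rintro P X Q P' (hr | hr) hI hTr
    · obtain ⟨Q1, Q2, a, b, c⟩ := h1.c2d hr hI hTr
      exact ⟨Q1, Q2, a, b, Or.inl c⟩
    · obtain ⟨Q1, Q2, a, b, c⟩ := h2.c2d hr hI hTr
      exact ⟨Q1, Q2, a, b, Or.inr c⟩
  c2e := by
    rintro P X Q (hr | hr) hS
    exacts [h1.c2e hr hS, h2.c2e hr hS]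

end Aux

/-- Stuttering Lemma. -/
theorem stmt4 {C A : Type} (Tr : C → Act A → C → Prop)
    (P Pd Pdd Q : C)
    (h1 : Tr P Act.tau Pd) (h2 : Tr Pd Act.tau Pdd) :
    (Bis Tr P Q → Bis Tr Pdd Q → Bis Tr Pd Q) ∧
    (∀ X : Set A, BisX Tr P X Q → BisX Tr Pdd X Q → BisX Tr Pd X Q) := by
  constructor
  · rintro ⟨Rp1, Rt1, hc1, hr1⟩ ⟨Rp2, Rt2, hc2, hr2⟩
    exact ⟨_, _, cbrbClosure (hc1.union hc2),
      Or.inr (Or.inl ⟨P, Pdd, Relation.ReflTransGen.single h1,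
        Relation.ReflTransGen.single h2, Or.inl hr1, Or.inr hr2⟩)⟩
  · rintro X ⟨Rp1, Rt1, hc1, hr1⟩ ⟨Rp2, Rt2, hc2, hr2⟩
    exact ⟨_, _, cbrbClosure (hc1.union hc2),
      Or.inr (Or.inl ⟨P, Pdd, Relation.ReflTransGen.single h1,
        Relation.ReflTransGen.single h2, Or.inl hr1, Or.inr hr2⟩)⟩
end

section
/- Concrete branching reactive bisimilarity ~ and each relation ~_X (for X ⊆ A) are equivalence relations. In particular, if R1 and R2 are concrete branching reactive bisimulations, then the symmetric closure of their relational composition, (R1 ∘ R2) ∪ (R2 ∘ R1), is again a concrete branching reactive bisimulation, where composition is defined componentwise on pairs and on triples with the same environment set X. -/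
section Aux
variable {S A : Type} {Tr : S → Act A → S → Prop} {Rp : S → S → Prop} {Rt : S → Set A → S → Prop}

lemma taupath_stable_eq {p q : S} (hs : Stable Tr p) (h : TauPath Tr p q) : p = q := by
  rcases h.cases_head with rfl | ⟨r, hr, _⟩
  · rfl
  · exact absurd ⟨r, hr⟩ hs

lemma cbrb_path_p (h : CBRB Tr Rp Rt) {P Q P' : S} (hpq : Rp P Q)
    (hp : TauPath Tr P P') : ∃ Q', TauPath Tr Q Q' ∧ Rp P' Q' := by
  induction hp with
  | refl => exact ⟨Q, Relation.ReflTransGen.refl, hpq⟩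
  | tail _ hstep ih =>
    obtain ⟨Q1, hq1, hr1⟩ := ih
    obtain ⟨Q1', Q2, hq1', hopt, _, hr2⟩ := h.c1a hr1 (by intro hh; cases hh) hstep
    rcases hopt with ⟨_, rfl⟩ | hstep'
    · exact ⟨Q1', hq1.trans hq1', hr2⟩
    · exact ⟨Q2, (hq1.trans hq1').tail hstep', hr2⟩

lemma cbrb_path_t (h : CBRB Tr Rp Rt) {P Q P' : S} {X : Set A} (hpq : Rt P X Q)
    (hp : TauPath Tr P P') : ∃ Q', TauPath Tr Q Q' ∧ Rt P' X Q' := by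
  induction hp with
  | refl => exact ⟨Q, Relation.ReflTransGen.refl, hpq⟩
  | tail _ hstep ih =>
    obtain ⟨Q1, hq1, hr1⟩ := ih
    obtain ⟨Q1', Q2, hq1', hopt, _, hr2⟩ := h.c2a hr1 hstep
    rcases hopt with ⟨_, rfl⟩ | hstep'
    · exact ⟨Q1', hq1.trans hq1', hr2⟩
    · exact ⟨Q2, (hq1.trans hq1').tail hstep', hr2⟩

lemma cbrb_stable_t (h : CBRB Tr Rp Rt) {P Q : S} {X : Set A} (hr : Rt P X Q)
    (hs : Stable Tr P) : ∃ Q', TauPath Tr Q Q' ∧ Rt P X Q' ∧ Stable Tr Q' := by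
  obtain ⟨Q0, hq0, hs0⟩ := h.c2e hr hs
  obtain ⟨P', hp', hr'⟩ := cbrb_path_t h (h.symm_t hr) hq0
  obtain rfl := taupath_stable_eq hs hp'
  exact ⟨Q0, hq0, h.symm_t hr', hs0⟩

lemma cbrb_idle_t (h : CBRB Tr Rp Rt) {P Q : S} {X : Set A} (hr : Rt P X Q)
    (hi : Idle Tr P X) : ∃ Q', TauPath Tr Q Q' ∧ Rt P X Q' ∧ Idle Tr Q' X := by
  obtain ⟨Q', hq, hr', hs'⟩ := cbrb_stable_t h hr hi.1
  refine ⟨Q', hq, hr', hs', ?_⟩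
  rintro a ha ⟨Q'', hstep⟩
  obtain ⟨P1, P2, hp1, hstep2, -, -⟩ := h.c2b (h.symm_t hr') ha hstep
  obtain rfl := taupath_stable_eq hi.1 hp1
  exact hi.2 a ha ⟨P2, hstep2⟩

end Aux

section Comp
variable {S A : Type} {Tr : S → Act A → S → Prop}
  {Rp1 Rp2 : S → S → Prop} {Rt1 Rt2 : S → Set A → S → Prop}

lemma comp_c1a (h1 : CBRB Tr Rp1 Rt1) (h2 : CBRB Tr Rp2 Rt2) {P R Q P' : S} {α : Act A}
    (hpr : Rp1 P R) (hrq : Rp2 R Q) (hα : α ≠ Act.to) (hstep : Tr P α P') :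
    ∃ Q1 Q2, TauPath Tr Q Q1 ∧ OptStep Tr α Q1 Q2 ∧
      (∃ R, Rp1 P R ∧ Rp2 R Q1) ∧ (∃ R, Rp1 P' R ∧ Rp2 R Q2) := by
  obtain ⟨R1, R2, hr1, hopt, hPR1, hP'R2⟩ := h1.c1a hpr hα hstep
  obtain ⟨Q1, hq1, hR1Q1⟩ := cbrb_path_p h2 hrq hr1
  rcases hopt with ⟨hτ, rfl⟩ | hstep'
  · exact ⟨Q1, Q1, hq1, Or.inl ⟨hτ, rfl⟩, ⟨R1, hPR1, hR1Q1⟩, ⟨R1, hP'R2, hR1Q1⟩⟩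
  · obtain ⟨Q1', Q2, hq1', hopt', hR1Q1', hR2Q2⟩ := h2.c1a hR1Q1 hα hstep'
    exact ⟨Q1', Q2, hq1.trans hq1', hopt', ⟨R1, hPR1, hR1Q1'⟩, ⟨R2, hP'R2, hR2Q2⟩⟩

lemma comp_c2a (h1 : CBRB Tr Rp1 Rt1) (h2 : CBRB Tr Rp2 Rt2) {P R Q P' : S} {X : Set A}
    (hpr : Rt1 P X R) (hrq : Rt2 R X Q) (hstep : Tr P Act.tau P') :
    ∃ Q1 Q2, TauPath Tr Q Q1 ∧ OptStep Tr Act.tau Q1 Q2 ∧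
      (∃ R, Rt1 P X R ∧ Rt2 R X Q1) ∧ (∃ R, Rt1 P' X R ∧ Rt2 R X Q2) := by
  obtain ⟨R1, R2, hr1, hopt, hPR1, hP'R2⟩ := h1.c2a hpr hstep
  obtain ⟨Q1, hq1, hR1Q1⟩ := cbrb_path_t h2 hrq hr1
  rcases hopt with ⟨hτ, rfl⟩ | hstep'
  · exact ⟨Q1, Q1, hq1, Or.inl ⟨hτ, rfl⟩, ⟨R1, hPR1, hR1Q1⟩, ⟨R1, hP'R2, hR1Q1⟩⟩
  · obtain ⟨Q1', Q2, hq1', hopt', hR1Q1', hR2Q2⟩ := h2.c2a hR1Q1 hstep'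
    exact ⟨Q1', Q2, hq1.trans hq1', hopt', ⟨R1, hPR1, hR1Q1'⟩, ⟨R2, hP'R2, hR2Q2⟩⟩

lemma comp_c2b (h1 : CBRB Tr Rp1 Rt1) (h2 : CBRB Tr Rp2 Rt2) {P R Q P' : S} {X : Set A} {a : A}
    (hpr : Rt1 P X R) (hrq : Rt2 R X Q) (ha : a ∈ X) (hstep : Tr P (Act.vis a) P') :
    ∃ Q1 Q2, TauPath Tr Q Q1 ∧ Tr Q1 (Act.vis a) Q2 ∧
      (∃ R, Rt1 P X R ∧ Rt2 R X Q1) ∧ (∃ R, Rp1 P' R ∧ Rp2 R Q2) := by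
  obtain ⟨R1, R2, hr1, hstep', hPR1, hP'R2⟩ := h1.c2b hpr ha hstep
  obtain ⟨Q1, hq1, hR1Q1⟩ := cbrb_path_t h2 hrq hr1
  obtain ⟨Q1', Q2, hq1', hstep'', hR1Q1', hR2Q2⟩ := h2.c2b hR1Q1 ha hstep'
  exact ⟨Q1', Q2, hq1.trans hq1', hstep'', ⟨R1, hPR1, hR1Q1'⟩, ⟨R2, hP'R2, hR2Q2⟩⟩

lemma comp_c2c (h1 : CBRB Tr Rp1 Rt1) (h2 : CBRB Tr Rp2 Rt2) {P R Q : S} {X : Set A}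
    (hpr : Rt1 P X R) (hrq : Rt2 R X Q) (hi : Idle Tr P X) :
    ∃ Q0, TauPath Tr Q Q0 ∧ (∃ R, Rp1 P R ∧ Rp2 R Q0) := by
  obtain ⟨R', hrr', hPR', hiR'⟩ := cbrb_idle_t h1 hpr hi
  obtain ⟨Q1, hq1, hR'Q1⟩ := cbrb_path_t h2 hrq hrr'
  obtain ⟨R0, hr0, hPR0⟩ := h1.c2c hPR' hi
  obtain rfl := (taupath_stable_eq hiR'.1 hr0).symm
  obtain ⟨Q0, hq0, hR'Q0⟩ := h2.c2c hR'Q1 hiR'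
  exact ⟨Q0, hq1.trans hq0, ⟨_, hPR0, hR'Q0⟩⟩

lemma comp_c2d (h1 : CBRB Tr Rp1 Rt1) (h2 : CBRB Tr Rp2 Rt2) {P R Q P' : S} {X : Set A}
    (hpr : Rt1 P X R) (hrq : Rt2 R X Q) (hi : Idle Tr P X) (hstep : Tr P Act.to P') :
    ∃ Q1 Q2, TauPath Tr Q Q1 ∧ Tr Q1 Act.to Q2 ∧ (∃ R, Rt1 P' X R ∧ Rt2 R X Q2) := by
  obtain ⟨R', hrr', hPR', hiR'⟩ := cbrb_idle_t h1 hpr hi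
  obtain ⟨Q1, hq1, hR'Q1⟩ := cbrb_path_t h2 hrq hrr'
  obtain ⟨R1, R2, hr1, hstep', hP'R2⟩ := h1.c2d hPR' hi hstep
  obtain rfl := (taupath_stable_eq hiR'.1 hr1).symm
  obtain ⟨Q1', Q2, hq1', hstep'', hR2Q2⟩ := h2.c2d hR'Q1 hiR' hstep'
  exact ⟨Q1', Q2, hq1.trans hq1', hstep'', ⟨R2, hP'R2, hR2Q2⟩⟩

lemma comp_c2e (h1 : CBRB Tr Rp1 Rt1) (h2 : CBRB Tr Rp2 Rt2) {P R Q : S} {X : Set A}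
    (hpr : Rt1 P X R) (hrq : Rt2 R X Q) (hs : Stable Tr P) :
    ∃ Q0, TauPath Tr Q Q0 ∧ Stable Tr Q0 := by
  obtain ⟨R', hrr', hPR', hsR'⟩ := cbrb_stable_t h1 hpr hs
  obtain ⟨Q1, hq1, hR'Q1⟩ := cbrb_path_t h2 hrq hrr'
  obtain ⟨Q0, hq0, hsQ0⟩ := h2.c2e hR'Q1 hsR'
  exact ⟨Q0, hq1.trans hq0, hsQ0⟩

lemma comp_cbrb (h1 : CBRB Tr Rp1 Rt1) (h2 : CBRB Tr Rp2 Rt2) :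
    CBRB Tr
      (fun P Q => (∃ R, Rp1 P R ∧ Rp2 R Q) ∨ (∃ R, Rp2 P R ∧ Rp1 R Q))
      (fun P X Q => (∃ R, Rt1 P X R ∧ Rt2 R X Q) ∨ (∃ R, Rt2 P X R ∧ Rt1 R X Q)) := by
  constructor
  · rintro P Q (⟨R, h, h'⟩ | ⟨R, h, h'⟩)
    · exact Or.inr ⟨R, h2.symm_p h', h1.symm_p h⟩
    · exact Or.inl ⟨R, h1.symm_p h', h2.symm_p h⟩
  · rintro P X Q (⟨R, h, h'⟩ | ⟨R, h, h'⟩)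
    · exact Or.inr ⟨R, h2.symm_t h', h1.symm_t h⟩
    · exact Or.inl ⟨R, h1.symm_t h', h2.symm_t h⟩
  · rintro P Q α P' (⟨R, h, h'⟩ | ⟨R, h, h'⟩) hα hstep
    · obtain ⟨Q1, Q2, a, b, c, d⟩ := comp_c1a h1 h2 h h' hα hstep
      exact ⟨Q1, Q2, a, b, Or.inl c, Or.inl d⟩
    · obtain ⟨Q1, Q2, a, b, c, d⟩ := comp_c1a h2 h1 h h' hα hstep
      exact ⟨Q1, Q2, a, b, Or.inr c, Or.inr d⟩
  · rintro P Q Y (⟨R, h, h'⟩ | ⟨R, h, h'⟩)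
    · exact Or.inl ⟨R, h1.c1b Y h, h2.c1b Y h'⟩
    · exact Or.inr ⟨R, h2.c1b Y h, h1.c1b Y h'⟩
  · rintro P X Q P' (⟨R, h, h'⟩ | ⟨R, h, h'⟩) hstep
    · obtain ⟨Q1, Q2, a, b, c, d⟩ := comp_c2a h1 h2 h h' hstep
      exact ⟨Q1, Q2, a, b, Or.inl c, Or.inl d⟩
    · obtain ⟨Q1, Q2, a, b, c, d⟩ := comp_c2a h2 h1 h h' hstep
      exact ⟨Q1, Q2, a, b, Or.inr c, Or.inr d⟩
  · rintro P X Q a P' (⟨R, h, h'⟩ | ⟨R, h, h'⟩) ha hstep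
    · obtain ⟨Q1, Q2, x, b, c, d⟩ := comp_c2b h1 h2 h h' ha hstep
      exact ⟨Q1, Q2, x, b, Or.inl c, Or.inl d⟩
    · obtain ⟨Q1, Q2, x, b, c, d⟩ := comp_c2b h2 h1 h h' ha hstep
      exact ⟨Q1, Q2, x, b, Or.inr c, Or.inr d⟩
  · rintro P X Q (⟨R, h, h'⟩ | ⟨R, h, h'⟩) hi
    · obtain ⟨Q0, a, b⟩ := comp_c2c h1 h2 h h' hi
      exact ⟨Q0, a, Or.inl b⟩
    · obtain ⟨Q0, a, b⟩ := comp_c2c h2 h1 h h' hi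
      exact ⟨Q0, a, Or.inr b⟩
  · rintro P X Q P' (⟨R, h, h'⟩ | ⟨R, h, h'⟩) hi hstep
    · obtain ⟨Q1, Q2, a, b, c⟩ := comp_c2d h1 h2 h h' hi hstep
      exact ⟨Q1, Q2, a, b, Or.inl c⟩
    · obtain ⟨Q1, Q2, a, b, c⟩ := comp_c2d h2 h1 h h' hi hstep
      exact ⟨Q1, Q2, a, b, Or.inr c⟩
  · rintro P X Q (⟨R, h, h'⟩ | ⟨R, h, h'⟩) hs
    · exact comp_c2e h1 h2 h h' hs
    · exact comp_c2e h2 h1 h h' hs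

lemma id_cbrb : CBRB Tr (Eq : S → S → Prop) (fun P _ Q => P = Q) := by
  constructor
  · exact fun h => h.symm
  · exact fun h => h.symm
  · rintro P Q α P' rfl hα hstep
    exact ⟨P, P', Relation.ReflTransGen.refl, Or.inr hstep, rfl, rfl⟩
  · rintro P Q Y rfl; rfl
  · rintro P X Q P' rfl hstep
    exact ⟨P, P', Relation.ReflTransGen.refl, Or.inr hstep, rfl, rfl⟩
  · rintro P X Q a P' rfl ha hstep
    exact ⟨P, P', Relation.ReflTransGen.refl, hstep, rfl, rfl⟩
  · rintro P X Q rfl hi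
    exact ⟨P, Relation.ReflTransGen.refl, rfl⟩
  · rintro P X Q P' rfl hi hstep
    exact ⟨P, P', Relation.ReflTransGen.refl, hstep, rfl⟩
  · rintro P X Q rfl hs
    exact ⟨P, Relation.ReflTransGen.refl, hs⟩

end Comp

/-- Concrete branching reactive bisimilarity and each `~_X` are equivalence relations; the
symmetric closure of the composition of two concrete branching reactive bisimulations is again
a concrete branching reactive bisimulation. -/
theorem stmt5 {C A : Type} (Tr : C → Act A → C → Prop) :
    Equivalence (Bis Tr) ∧
    (∀ X : Set A, Equivalence (fun P Q : C => BisX Tr P X Q)) ∧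
    (∀ (Rp1 Rp2 : C → C → Prop) (Rt1 Rt2 : C → Set A → C → Prop),
      CBRB Tr Rp1 Rt1 → CBRB Tr Rp2 Rt2 →
      CBRB Tr
        (fun P Q => (∃ R, Rp1 P R ∧ Rp2 R Q) ∨ (∃ R, Rp2 P R ∧ Rp1 R Q))
        (fun P X Q => (∃ R, Rt1 P X R ∧ Rt2 R X Q) ∨ (∃ R, Rt2 P X R ∧ Rt1 R X Q))) := by
  refine ⟨⟨?_, ?_, ?_⟩, fun X => ⟨?_, ?_, ?_⟩, fun Rp1 Rp2 Rt1 Rt2 h1 h2 => comp_cbrb h1 h2⟩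
  · exact fun P => ⟨Eq, fun P _ Q => P = Q, id_cbrb, rfl⟩
  · intro P Q h
    obtain ⟨Rp, Rt, h, hpq⟩ := h
    exact ⟨Rp, Rt, h, h.symm_p hpq⟩
  · intro P Q R hPQ hQR
    obtain ⟨Rp1, Rt1, h1, h12⟩ := hPQ
    obtain ⟨Rp2, Rt2, h2, h23⟩ := hQR
    exact ⟨_, _, comp_cbrb h1 h2, Or.inl ⟨_, h12, h23⟩⟩
  · exact fun P => ⟨Eq, fun P _ Q => P = Q, id_cbrb, rfl⟩
  · intro P Q h
    obtain ⟨Rp, Rt, h, hpq⟩ := h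
    exact ⟨Rp, Rt, h, h.symm_t hpq⟩
  · intro P Q R hPQ hQR
    obtain ⟨Rp1, Rt1, h1, h12⟩ := hPQ
    obtain ⟨Rp2, Rt2, h2, h23⟩ := hQR
    exact ⟨_, _, comp_cbrb h1 h2, Or.inl ⟨_, h12, h23⟩⟩
end

section
/- For all processes P and Q and every X ⊆ A: P is concrete branching X-bisimilar to Q if and only if θ_X(P) is concrete branching reactive bisimilar to θ_X(Q), where θ_X is the environment operator that restricts visible actions to X unless the argument is deadlocked under X. -/
/-- Semantics of the environment operator `θ_X`:
`θ_X(P) -tau-> θ_X(P')` iff `P -tau-> P'`; `θ_X(P) -a-> P'` iff `P -a-> P'` and `a ∈ X`;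
`θ_X(P) -α-> P'` iff `P -α-> P'` and `I(P) ∩ (X ∪ {tau}) = ∅`. -/
def ThetaSem {C A : Type} (Tr : C → Act A → C → Prop) (theta : Set A → C → C) : Prop :=
  ∀ (X : Set A) (P : C) (α : Act A) (Q' : C),
    Tr (theta X P) α Q' ↔
      ((α = Act.tau ∧ ∃ P', Tr P Act.tau P' ∧ Q' = theta X P') ∨
       (∃ a, α = Act.vis a ∧ a ∈ X ∧ Tr P α Q') ∨
       (Idle Tr P X ∧ Tr P α Q'))

namespace Stmt8Aux

variable {C A : Type} {Tr : C → Act A → C → Prop} {theta : Set A → C → C}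
variable {Rp : C → C → Prop} {Rt : C → Set A → C → Prop}

lemma stable_path_eq {p q : C} (hs : Stable Tr p) (h : TauPath Tr p q) : q = p := by
  rcases h.cases_head with h | ⟨c, hc, _⟩
  · exact h.symm
  · exact absurd ⟨c, hc⟩ hs

lemma optStep_stable_eq {p q : C} (hs : Stable Tr p) (h : OptStep Tr Act.tau p q) : q = p := by
  rcases h with ⟨-, rfl⟩ | h
  · rfl
  · exact absurd ⟨q, h⟩ hs

section Theta
variable (htheta : ThetaSem Tr theta)
include htheta

lemma thTau {X : Set A} {p p'} (h : Tr p Act.tau p') :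
    Tr (theta X p) Act.tau (theta X p') :=
  (htheta X p Act.tau (theta X p')).2 (Or.inl ⟨rfl, p', h, rfl⟩)

lemma thVis {X : Set A} {p p' a} (ha : a ∈ X) (h : Tr p (Act.vis a) p') :
    Tr (theta X p) (Act.vis a) p' :=
  (htheta X p (Act.vis a) p').2 (Or.inr (Or.inl ⟨a, rfl, ha, h⟩))

lemma thIdle {X : Set A} {p p' α} (hi : Idle Tr p X) (h : Tr p α p') :
    Tr (theta X p) α p' :=
  (htheta X p α p').2 (Or.inr (Or.inr ⟨hi, h⟩))

lemma thTau_dec {X : Set A} {p q'} (h : Tr (theta X p) Act.tau q') :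
    ∃ p', Tr p Act.tau p' ∧ q' = theta X p' := by
  rcases (htheta X p Act.tau q').1 h with ⟨-, p', h1, h2⟩ | ⟨a, ha, -⟩ | ⟨hi, ht⟩
  · exact ⟨p', h1, h2⟩
  · exact absurd ha (by simp)
  · exact absurd ⟨q', ht⟩ hi.1

lemma thVis_dec {X : Set A} {p q' a} (h : Tr (theta X p) (Act.vis a) q') :
    Tr p (Act.vis a) q' := by
  rcases (htheta X p (Act.vis a) q').1 h with ⟨h1, -⟩ | ⟨b, hb, -, ht⟩ | ⟨-, ht⟩
  · exact absurd h1 (by simp)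
  · exact ht
  · exact ht

lemma thVis_dec' {X : Set A} {p q' a} (h : Tr (theta X p) (Act.vis a) q') :
    Tr p (Act.vis a) q' ∧ (a ∈ X ∨ Idle Tr p X) := by
  rcases (htheta X p (Act.vis a) q').1 h with ⟨h1, -⟩ | ⟨b, hb, hbX, ht⟩ | ⟨hi, ht⟩
  · exact absurd h1 (by simp)
  · cases hb
    exact ⟨ht, Or.inl hbX⟩
  · exact ⟨ht, Or.inr hi⟩

lemma thTo_dec {X : Set A} {p q'} (h : Tr (theta X p) Act.to q') :
    Idle Tr p X ∧ Tr p Act.to q' := by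
  rcases (htheta X p Act.to q').1 h with ⟨h1, -⟩ | ⟨b, hb, -, -⟩ | ⟨hi, ht⟩
  · exact absurd h1 (by simp)
  · exact absurd hb (by simp)
  · exact ⟨hi, ht⟩

lemma thStable {X : Set A} {p} : Stable Tr (theta X p) ↔ Stable Tr p := by
  constructor
  · intro h hp
    obtain ⟨p', hp'⟩ := hp
    exact h ⟨theta X p', thTau htheta hp'⟩
  · intro h hp
    obtain ⟨q', hq⟩ := hp
    obtain ⟨p', hp', -⟩ := thTau_dec htheta hq
    exact h ⟨p', hp'⟩

lemma thPath_lift {X : Set A} {p q} (h : TauPath Tr p q) :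
    TauPath Tr (theta X p) (theta X q) := by
  induction h with
  | refl => exact Relation.ReflTransGen.refl
  | tail _ hbc ih => exact ih.tail (thTau htheta hbc)

lemma thPath_dec {X : Set A} {p r} (h : TauPath Tr (theta X p) r) :
    ∃ q, TauPath Tr p q ∧ r = theta X q := by
  induction h with
  | refl => exact ⟨p, Relation.ReflTransGen.refl, rfl⟩
  | tail _ hbc ih =>
    obtain ⟨q, hq, rfl⟩ := ih
    obtain ⟨q', hq', rfl⟩ := thTau_dec htheta hbc
    exact ⟨q', hq.tail hq', rfl⟩

lemma idle_of_thIdle {X Y : Set A} {p} (hX : Idle Tr p X) (hY : Idle Tr (theta X p) Y) :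
    Idle Tr p Y :=
  ⟨hX.1, fun a ha h => hY.2 a ha (h.imp fun _ hp => thIdle htheta hX hp)⟩

lemma thIdle_of_idle {X Y : Set A} {p} (hY : Idle Tr p Y) : Idle Tr (theta X p) Y :=
  ⟨(thStable htheta).mpr hY.1, fun a ha h => hY.2 a ha (h.imp fun _ hq => thVis_dec htheta hq)⟩

end Theta

section Bisim
variable (hB : CBRB Tr Rp Rt)
include hB

lemma rp_stable_path {P Q Q'} (hs : Stable Tr P) (h : Rp P Q)
    (hp : TauPath Tr Q Q') : Rp P Q' := by
  induction hp with
  | refl => exact h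
  | tail _ hbc ih =>
    rcases hB.c1a (hB.symm_p ih) (by simp) hbc with ⟨P1, P2, hpath, hopt, -, h3⟩
    rw [stable_path_eq hs hpath] at hopt
    rw [optStep_stable_eq hs hopt] at h3
    exact hB.symm_p h3

lemma rt_stable_path {P X Q Q'} (hs : Stable Tr P) (h : Rt P X Q)
    (hp : TauPath Tr Q Q') : Rt P X Q' := by
  induction hp with
  | refl => exact h
  | tail _ hbc ih =>
    rcases hB.c2a (hB.symm_t ih) hbc with ⟨P1, P2, hpath, hopt, -, h3⟩
    rw [stable_path_eq hs hpath] at hopt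
    rw [optStep_stable_eq hs hopt] at h3
    exact hB.symm_t h3

lemma rp_stable_match {P Q} (hs : Stable Tr P) (h : Rp P Q) :
    ∃ Q', TauPath Tr Q Q' ∧ Stable Tr Q' ∧ Rp P Q' := by
  obtain ⟨Q0, hp, hst⟩ := hB.c2e (hB.c1b ∅ h) hs
  exact ⟨Q0, hp, hst, rp_stable_path hB hs h hp⟩

lemma rp_no_vis {P Q a} (hs : Stable Tr P) (hna : ¬ ∃ p', Tr P (Act.vis a) p')
    (h : Rp P Q) : ¬ ∃ q', Tr Q (Act.vis a) q' := by
  rintro ⟨q', hq⟩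
  rcases hB.c1a (hB.symm_p h) (by simp) hq with ⟨P1, P2, hpath, hopt, -, -⟩
  obtain rfl : P1 = P := stable_path_eq hs hpath
  rcases hopt with ⟨h1, -⟩ | h2
  · exact absurd h1 (by simp)
  · exact hna ⟨P2, h2⟩

lemma rp_idle_match {P Q} {Y : Set A} (hi : Idle Tr P Y) (h : Rp P Q) :
    ∃ Q', TauPath Tr Q Q' ∧ Idle Tr Q' Y ∧ Rp P Q' := by
  obtain ⟨Q', hp, hst, h'⟩ := rp_stable_match hB hi.1 h
  exact ⟨Q', hp, ⟨hst, fun a ha => rp_no_vis hB hi.1 (hi.2 a ha) h'⟩, h'⟩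

end Bisim

section Forward
variable (htheta : ThetaSem Tr theta) (hB : CBRB Tr Rp Rt)
include htheta hB

lemma fwd_tau {P Q P'} {X : Set A} (h : Rt P X Q) (hP : Tr P Act.tau P') :
    ∃ Q1 Q2, TauPath Tr (theta X Q) (theta X Q1) ∧
      OptStep Tr Act.tau (theta X Q1) (theta X Q2) ∧ Rt P X Q1 ∧ Rt P' X Q2 := by
  obtain ⟨Q1, Q2, hp, ho, h1, h2⟩ := hB.c2a h hP
  refine ⟨Q1, Q2, thPath_lift htheta hp, ?_, h1, h2⟩
  rcases ho with ⟨-, rfl⟩ | ho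
  · exact Or.inl ⟨rfl, rfl⟩
  · exact Or.inr (thTau htheta ho)

lemma fwd_vis {P Q P' a} {X : Set A} (h : Rt P X Q) (hP : Tr P (Act.vis a) P')
    (hcase : a ∈ X ∨ Idle Tr P X) :
    ∃ Q1 Q2, TauPath Tr (theta X Q) (theta X Q1) ∧
      Tr (theta X Q1) (Act.vis a) Q2 ∧ Rt P X Q1 ∧ Rp P' Q2 := by
  rcases hcase with ha | hi
  · obtain ⟨Q1, Q2, hp, hstep, h1, h2⟩ := hB.c2b h ha hP
    exact ⟨Q1, Q2, thPath_lift htheta hp, thVis htheta ha hstep, h1, h2⟩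
  · obtain ⟨Q0, hp0, h0⟩ := hB.c2c h hi
    obtain ⟨Q1, hp1, hi1, h1⟩ := rp_idle_match hB hi h0
    obtain ⟨Q1', Q2, hp2, ho, -, h3⟩ := hB.c1a h1 (by simp) hP
    rw [stable_path_eq hi1.1 hp2] at ho
    rcases ho with ⟨he, -⟩ | ho
    · exact absurd he (by simp)
    · exact ⟨Q1, Q2, thPath_lift htheta (hp0.trans hp1), thIdle htheta hi1 ho,
        hB.c1b X h1, h3⟩

lemma fwd_to {P Q P'} {X Y : Set A} (h : Rt P X Q) (hiX : Idle Tr P X)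
    (hiY : Idle Tr P Y) (hP : Tr P Act.to P') :
    ∃ Q1 Q2, TauPath Tr (theta X Q) (theta X Q1) ∧
      Tr (theta X Q1) Act.to Q2 ∧ Rt P' Y Q2 := by
  obtain ⟨Q0, hp0, h0⟩ := hB.c2c h hiX
  have hiW : Idle Tr P (X ∪ Y) :=
    ⟨hiX.1, fun a ha => ((Set.mem_union a X Y).1 ha).elim (hiX.2 a) (hiY.2 a)⟩
  obtain ⟨Q1, hp1, hi1, h1⟩ := rp_idle_match hB hiW h0
  have hi1X : Idle Tr Q1 X := ⟨hi1.1, fun a ha => hi1.2 a (Set.mem_union_left _ ha)⟩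
  have hi1Y : Idle Tr Q1 Y := ⟨hi1.1, fun a ha => hi1.2 a (Set.mem_union_right _ ha)⟩
  obtain ⟨Q1', Q2, hp2, hstep, h2⟩ := hB.c2d (hB.c1b Y h1) hiY hP
  rw [stable_path_eq hi1.1 hp2] at hstep
  exact ⟨Q1, Q2, thPath_lift htheta (hp0.trans hp1), thIdle htheta hi1X hstep, h2⟩

lemma forwardCBRB : CBRB Tr
    (fun M N => Rp M N ∨ ∃ P Q X, M = theta X P ∧ N = theta X Q ∧ Rt P X Q)
    (fun M Y N => Rt M Y N ∨ ∃ P Q X, M = theta X P ∧ N = theta X Q ∧ Rt P X Q) := by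
  constructor
  case symm_p =>
    rintro M N (h | ⟨P, Q, X, rfl, rfl, h⟩)
    · exact Or.inl (hB.symm_p h)
    · exact Or.inr ⟨Q, P, X, rfl, rfl, hB.symm_t h⟩
  case symm_t =>
    rintro M Y N (h | ⟨P, Q, X, rfl, rfl, h⟩)
    · exact Or.inl (hB.symm_t h)
    · exact Or.inr ⟨Q, P, X, rfl, rfl, hB.symm_t h⟩
  case c1a =>
    rintro M N α M' (h | ⟨P, Q, X, rfl, rfl, h⟩) hα hstep
    · obtain ⟨Q1, Q2, hp, ho, h1, h2⟩ := hB.c1a h hα hstep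
      exact ⟨Q1, Q2, hp, ho, Or.inl h1, Or.inl h2⟩
    · match α, hα with
      | Act.tau, _ =>
        obtain ⟨P', hP', rfl⟩ := thTau_dec htheta hstep
        obtain ⟨Q1, Q2, hp, ho, h1, h2⟩ := fwd_tau htheta hB h hP'
        exact ⟨theta X Q1, theta X Q2, hp, ho,
          Or.inr ⟨P, Q1, X, rfl, rfl, h1⟩, Or.inr ⟨P', Q2, X, rfl, rfl, h2⟩⟩
      | Act.vis a, _ =>
        obtain ⟨hP', hcase⟩ := thVis_dec' htheta hstep
        obtain ⟨Q1, Q2, hp, hstep2, h1, h2⟩ := fwd_vis htheta hB h hP' hcase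
        exact ⟨theta X Q1, Q2, hp, Or.inr hstep2,
          Or.inr ⟨P, Q1, X, rfl, rfl, h1⟩, Or.inl h2⟩
  case c1b =>
    rintro M N Y (h | h)
    · exact Or.inl (hB.c1b Y h)
    · exact Or.inr h
  case c2a =>
    rintro M Y N M' (h | ⟨P, Q, X, rfl, rfl, h⟩) hstep
    · obtain ⟨Q1, Q2, hp, ho, h1, h2⟩ := hB.c2a h hstep
      exact ⟨Q1, Q2, hp, ho, Or.inl h1, Or.inl h2⟩
    · obtain ⟨P', hP', rfl⟩ := thTau_dec htheta hstep
      obtain ⟨Q1, Q2, hp, ho, h1, h2⟩ := fwd_tau htheta hB h hP'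
      exact ⟨theta X Q1, theta X Q2, hp, ho,
        Or.inr ⟨P, Q1, X, rfl, rfl, h1⟩, Or.inr ⟨P', Q2, X, rfl, rfl, h2⟩⟩
  case c2b =>
    rintro M Y N a M' (h | ⟨P, Q, X, rfl, rfl, h⟩) ha hstep
    · obtain ⟨Q1, Q2, hp, hstep2, h1, h2⟩ := hB.c2b h ha hstep
      exact ⟨Q1, Q2, hp, hstep2, Or.inl h1, Or.inl h2⟩
    · obtain ⟨hP', hcase⟩ := thVis_dec' htheta hstep
      obtain ⟨Q1, Q2, hp, hstep2, h1, h2⟩ := fwd_vis htheta hB h hP' hcase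
      exact ⟨theta X Q1, Q2, hp, hstep2,
        Or.inr ⟨P, Q1, X, rfl, rfl, h1⟩, Or.inl h2⟩
  case c2c =>
    rintro M Y N (h | ⟨P, Q, X, rfl, rfl, h⟩) hi
    · obtain ⟨Q0, hp, h0⟩ := hB.c2c h hi
      exact ⟨Q0, hp, Or.inl h0⟩
    · have hsP : Stable Tr P := (thStable htheta).mp hi.1
      obtain ⟨Q0, hp, hst⟩ := hB.c2e h hsP
      exact ⟨theta X Q0, thPath_lift htheta hp,
        Or.inr ⟨P, Q0, X, rfl, rfl, rt_stable_path hB hsP h hp⟩⟩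
  case c2d =>
    rintro M Y N M' (h | ⟨P, Q, X, rfl, rfl, h⟩) hi hstep
    · obtain ⟨Q1, Q2, hp, hstep2, h2⟩ := hB.c2d h hi hstep
      exact ⟨Q1, Q2, hp, hstep2, Or.inl h2⟩
    · obtain ⟨hiX, hstep'⟩ := thTo_dec htheta hstep
      have hiY : Idle Tr P Y := idle_of_thIdle htheta hiX hi
      obtain ⟨Q1, Q2, hp, hstep2, h2⟩ := fwd_to htheta hB h hiX hiY hstep'
      exact ⟨theta X Q1, Q2, hp, hstep2, Or.inl h2⟩
  case c2e =>
    rintro M Y N (h | ⟨P, Q, X, rfl, rfl, h⟩) hst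
    · obtain ⟨Q0, hp, h0⟩ := hB.c2e h hst
      exact ⟨Q0, hp, h0⟩
    · have hsP : Stable Tr P := (thStable htheta).mp hst
      obtain ⟨Q0, hp, h0⟩ := hB.c2e h hsP
      exact ⟨theta X Q0, thPath_lift htheta hp, (thStable htheta).mpr h0⟩

end Forward

section Backward
variable (htheta : ThetaSem Tr theta) (hB : CBRB Tr Rp Rt)
include htheta hB

lemma bwd_to {M N M'} {Y Z : Set A} (h : Rp (theta Z M) (theta Z N))
    (hiY : Idle Tr M Y) (hiZ : Idle Tr M Z) (hstep : Tr M Act.to M') :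
    ∃ n1 N2, TauPath Tr N n1 ∧ Tr n1 Act.to N2 ∧ Rt M' Y N2 := by
  obtain ⟨N1, N2, hp, hstep2, h2⟩ :=
    hB.c2d (hB.c1b Y h) (thIdle_of_idle htheta hiY) (thIdle htheta hiZ hstep)
  obtain ⟨n1, hpn, rfl⟩ := thPath_dec htheta hp
  obtain ⟨-, hstep3⟩ := thTo_dec htheta hstep2
  exact ⟨n1, N2, hpn, hstep3, h2⟩

lemma bwd_vis {M N M' a} {Y : Set A} (h : Rp (theta Y M) (theta Y N))
    (hstep : Tr (theta Y M) (Act.vis a) M') :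
    ∃ n1 N2, TauPath Tr N n1 ∧ Tr n1 (Act.vis a) N2 ∧
      Rp (theta Y M) (theta Y n1) ∧ Rp M' N2 := by
  obtain ⟨N1, N2, hp, ho, h1, h2⟩ := hB.c1a h (by simp) hstep
  obtain ⟨n1, hpn, rfl⟩ := thPath_dec htheta hp
  rcases ho with ⟨he, -⟩ | ho
  · exact absurd he (by simp)
  · exact ⟨n1, N2, hpn, thVis_dec htheta ho, h1, h2⟩

lemma bwd_idle {M N} {Y : Set A} (h : Rp (theta Y M) (theta Y N)) (hi : Idle Tr M Y) :
    ∃ n', TauPath Tr N n' ∧ Idle Tr n' Y ∧ Rp (theta Y M) (theta Y n') := by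
  obtain ⟨N', hp, hst, h'⟩ := rp_stable_match hB ((thStable htheta).mpr hi.1) h
  obtain ⟨n', hpn, rfl⟩ := thPath_dec htheta hp
  have hnoM : ∀ a ∈ Y, ¬ ∃ q', Tr (theta Y M) (Act.vis a) q' := fun a ha hex =>
    hi.2 a ha (hex.imp fun _ hq => thVis_dec htheta hq)
  have hidle : Idle Tr n' Y := by
    refine ⟨(thStable htheta).mp hst, fun a ha hex => ?_⟩
    obtain ⟨q, hq⟩ := hex
    exact rp_no_vis hB ((thStable htheta).mpr hi.1) (hnoM a ha) h'
      ⟨q, thVis htheta ha hq⟩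
  exact ⟨n', hpn, hidle, h'⟩

lemma backwardCBRB : CBRB Tr
    (fun M N => Rp M N ∨ ∃ Z, Idle Tr M Z ∧ Idle Tr N Z ∧ Rp (theta Z M) (theta Z N))
    (fun M Y N => Rt M Y N ∨ Rp (theta Y M) (theta Y N) ∨
      ∃ Z, Idle Tr M Z ∧ Idle Tr N Z ∧ Rp (theta Z M) (theta Z N)) := by
  constructor
  case symm_p =>
    rintro M N (h | ⟨Z, h1, h2, h3⟩)
    · exact Or.inl (hB.symm_p h)
    · exact Or.inr ⟨Z, h2, h1, hB.symm_p h3⟩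
  case symm_t =>
    rintro M Y N (h | h | ⟨Z, h1, h2, h3⟩)
    · exact Or.inl (hB.symm_t h)
    · exact Or.inr (Or.inl (hB.symm_p h))
    · exact Or.inr (Or.inr ⟨Z, h2, h1, hB.symm_p h3⟩)
  case c1a =>
    rintro M N α M' (h | ⟨Z, hiM, hiN, h⟩) hα hstep
    · obtain ⟨Q1, Q2, hp, ho, h1, h2⟩ := hB.c1a h hα hstep
      exact ⟨Q1, Q2, hp, ho, Or.inl h1, Or.inl h2⟩
    · match α, hα with
      | Act.tau, _ => exact absurd ⟨M', hstep⟩ hiM.1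
      | Act.vis a, _ =>
        obtain ⟨N1, N2, hp, ho, -, h2⟩ :=
          hB.c1a h (by simp) (thIdle htheta hiM hstep)
        obtain rfl : N1 = theta Z N := stable_path_eq ((thStable htheta).mpr hiN.1) hp
        rcases ho with ⟨he, -⟩ | ho
        · exact absurd he (by simp)
        · exact ⟨N, N2, Relation.ReflTransGen.refl, Or.inr (thVis_dec htheta ho),
            Or.inr ⟨Z, hiM, hiN, h⟩, Or.inl h2⟩
  case c1b =>
    rintro M N Y (h | ⟨Z, h1, h2, h3⟩)
    · exact Or.inl (hB.c1b Y h)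
    · exact Or.inr (Or.inr ⟨Z, h1, h2, h3⟩)
  case c2a =>
    rintro M Y N M' (h | h | ⟨Z, hiM, hiN, h⟩) hstep
    · obtain ⟨Q1, Q2, hp, ho, h1, h2⟩ := hB.c2a h hstep
      exact ⟨Q1, Q2, hp, ho, Or.inl h1, Or.inl h2⟩
    · obtain ⟨N1, N2, hp, ho, h1, h2⟩ := hB.c1a h (by simp) (thTau htheta hstep)
      obtain ⟨n1, hpn, rfl⟩ := thPath_dec htheta hp
      rcases ho with ⟨-, rfl⟩ | ho
      · exact ⟨n1, n1, hpn, Or.inl ⟨rfl, rfl⟩,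
          Or.inr (Or.inl h1), Or.inr (Or.inl h2)⟩
      · obtain ⟨n2, hn2, rfl⟩ := thTau_dec htheta ho
        exact ⟨n1, n2, hpn, Or.inr hn2, Or.inr (Or.inl h1), Or.inr (Or.inl h2)⟩
    · exact absurd ⟨M', hstep⟩ hiM.1
  case c2b =>
    rintro M Y N a M' (h | h | ⟨Z, hiM, hiN, h⟩) ha hstep
    · obtain ⟨Q1, Q2, hp, hstep2, h1, h2⟩ := hB.c2b h ha hstep
      exact ⟨Q1, Q2, hp, hstep2, Or.inl h1, Or.inl h2⟩
    · obtain ⟨n1, N2, hpn, hstep2, h1, h2⟩ :=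
        bwd_vis htheta hB h (thVis htheta ha hstep)
      exact ⟨n1, N2, hpn, hstep2, Or.inr (Or.inl h1), Or.inl h2⟩
    · obtain ⟨N1, N2, hp, ho, -, h2⟩ :=
        hB.c1a h (by simp) (thIdle htheta hiM hstep)
      obtain rfl : N1 = theta Z N := stable_path_eq ((thStable htheta).mpr hiN.1) hp
      rcases ho with ⟨he, -⟩ | ho
      · exact absurd he (by simp)
      · exact ⟨N, N2, Relation.ReflTransGen.refl, thVis_dec htheta ho,
          Or.inr (Or.inr ⟨Z, hiM, hiN, h⟩), Or.inl h2⟩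
  case c2c =>
    rintro M Y N (h | h | ⟨Z, hiM, hiN, h⟩) hi
    · obtain ⟨Q0, hp, h0⟩ := hB.c2c h hi
      exact ⟨Q0, hp, Or.inl h0⟩
    · obtain ⟨n', hpn, hidle, h'⟩ := bwd_idle htheta hB h hi
      exact ⟨n', hpn, Or.inr ⟨Y, hi, hidle, h'⟩⟩
    · exact ⟨N, Relation.ReflTransGen.refl, Or.inr ⟨Z, hiM, hiN, h⟩⟩
  case c2d =>
    rintro M Y N M' (h | h | ⟨Z, hiM, hiN, h⟩) hi hstep
    · obtain ⟨Q1, Q2, hp, hstep2, h2⟩ := hB.c2d h hi hstep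
      exact ⟨Q1, Q2, hp, hstep2, Or.inl h2⟩
    · obtain ⟨n1, N2, hpn, hstep2, h2⟩ := bwd_to htheta hB h hi hi hstep
      exact ⟨n1, N2, hpn, hstep2, Or.inl h2⟩
    · obtain ⟨n1, N2, hpn, hstep2, h2⟩ := bwd_to htheta hB h hi hiM hstep
      exact ⟨n1, N2, hpn, hstep2, Or.inl h2⟩
  case c2e =>
    rintro M Y N (h | h | ⟨Z, hiM, hiN, h⟩) hst
    · exact hB.c2e h hst
    · obtain ⟨N0, hp, h0⟩ := hB.c2e (hB.c1b ∅ h) ((thStable htheta).mpr hst)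
      obtain ⟨n0, hpn, rfl⟩ := thPath_dec htheta hp
      exact ⟨n0, hpn, (thStable htheta).mp h0⟩
    · exact ⟨N, Relation.ReflTransGen.refl, hiN.1⟩

end Backward

end Stmt8Aux

/-- `P ~_X Q` iff `θ_X(P) ~ θ_X(Q)`. -/
theorem stmt8 {C A : Type} (Tr : C → Act A → C → Prop) (theta : Set A → C → C)
    (htheta : ThetaSem Tr theta) :
    ∀ (P Q : C) (X : Set A), BisX Tr P X Q ↔ Bis Tr (theta X P) (theta X Q) := by
  intro P Q X
  constructor
  · rintro ⟨Rp, Rt, hB, hRt⟩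
    exact ⟨_, _, Stmt8Aux.forwardCBRB htheta hB, Or.inr ⟨P, Q, X, rfl, rfl, hRt⟩⟩
  · rintro ⟨Rp, Rt, hB, hRp⟩
    exact ⟨_, _, Stmt8Aux.backwardCBRB htheta hB, Or.inr (Or.inl hRp)⟩
end

section
/- Bisimulation up to strong bisimilarity is sound: P is concrete branching reactive bisimilar to Q if and only if there exists a concrete branching time-out bisimulation B up to strong bisimilarity with P B Q. In particular, if B is a concrete branching time-out bisimulation up to strong bisimilarity, then the composition ~strong ∘ B ∘ ~strong is a concrete branching time-out bisimulation. -/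
/-- A strong bisimulation, treating all actions (including `tau` and `t`) alike. -/
def StrongB {S A : Type} (Tr : S → Act A → S → Prop) (R : S → S → Prop) : Prop :=
  (∀ {p q}, R p q → R q p) ∧
  (∀ {p q α p'}, R p q → Tr p α p' → ∃ q', Tr q α q' ∧ R p' q')

/-- Strong bisimilarity. -/
def sbis {S A : Type} (Tr : S → Act A → S → Prop) (p q : S) : Prop :=
  ∃ R, StrongB Tr R ∧ R p q

/-- A concrete branching time-out bisimulation (relative to the environment operator `theta`). -/
def CBTB {S A : Type} (Tr : S → Act A → S → Prop) (theta : Set A → S → S)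
    (B : S → S → Prop) : Prop :=
  (∀ {p q}, B p q → B q p) ∧
  (∀ {p q α p'}, B p q → α ≠ Act.to → Tr p α p' →
     ∃ q1 q2, TauPath Tr q q1 ∧ OptStep Tr α q1 q2 ∧ B p q1 ∧ B p' q2) ∧
  (∀ {p q} (X : Set A), ∀ {p'}, B p q → Idle Tr p X → Tr p Act.to p' →
     ∃ q1 q2, TauPath Tr q q1 ∧ Tr q1 Act.to q2 ∧ B (theta X p') (theta X q2)) ∧
  (∀ {p q}, B p q → Stable Tr p → ∃ q0, TauPath Tr q q0 ∧ Stable Tr q0)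

/-- The composition `~strong ∘ B ∘ ~strong`. -/
def UpToS {S A : Type} (Tr : S → Act A → S → Prop) (B : S → S → Prop) (p q : S) : Prop :=
  ∃ p' q', sbis Tr p p' ∧ B p' q' ∧ sbis Tr q' q

/-- A concrete branching time-out bisimulation up to strong bisimilarity. -/
def CBTBuptoS {S A : Type} (Tr : S → Act A → S → Prop) (theta : Set A → S → S)
    (B : S → S → Prop) : Prop :=
  (∀ {p q}, B p q → B q p) ∧
  (∀ {p q α p'}, B p q → α ≠ Act.to → Tr p α p' →
     ∃ q1 q2, TauPath Tr q q1 ∧ OptStep Tr α q1 q2 ∧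
       UpToS Tr B p q1 ∧ UpToS Tr B p' q2) ∧
  (∀ {p q} (X : Set A), ∀ {p'}, B p q → Idle Tr p X → Tr p Act.to p' →
     ∃ q1 q2, TauPath Tr q q1 ∧ Tr q1 Act.to q2 ∧
       UpToS Tr B (theta X p') (theta X q2)) ∧
  (∀ {p q}, B p q → Stable Tr p → ∃ q0, TauPath Tr q q0 ∧ Stable Tr q0)

/-- Concrete branching reactive bisimilarity, characterised via concrete branching
time-out bisimulations. -/
def BisT {S A : Type} (Tr : S → Act A → S → Prop) (theta : Set A → S → S) (p q : S) : Prop :=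
  ∃ B, CBTB Tr theta B ∧ B p q

section helpers
variable {S A : Type} {Tr : S → Act A → S → Prop}

theorem sbis_refl (p : S) : sbis Tr p p :=
  ⟨Eq, ⟨fun h => h.symm, fun h ht => ⟨_, h ▸ ht, rfl⟩⟩, rfl⟩

theorem sbis_symm {p q : S} (h : sbis Tr p q) : sbis Tr q p := by
  obtain ⟨R, hR, hpq⟩ := h
  exact ⟨R, hR, hR.1 hpq⟩

theorem sbis_step {p q α p'} (h : sbis Tr p q) (ht : Tr p α p') :
    ∃ q', Tr q α q' ∧ sbis Tr p' q' := by
  obtain ⟨R, hR, hpq⟩ := h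
  obtain ⟨q', hq', hR'⟩ := hR.2 hpq ht
  exact ⟨q', hq', R, hR, hR'⟩

theorem sbis_trans {p q r : S} (h1 : sbis Tr p q) (h2 : sbis Tr q r) : sbis Tr p r := by
  refine ⟨fun a c => ∃ b, sbis Tr a b ∧ sbis Tr b c, ⟨?_, ?_⟩, q, h1, h2⟩
  · rintro a c ⟨b, h1, h2⟩; exact ⟨b, sbis_symm h2, sbis_symm h1⟩
  · rintro a c α a' ⟨b, h1, h2⟩ ht
    obtain ⟨b', hb', h1'⟩ := sbis_step h1 ht
    obtain ⟨c', hc', h2'⟩ := sbis_step h2 hb'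
    exact ⟨c', hc', b', h1', h2'⟩

theorem sbis_tauPath {p q p'} (h : sbis Tr p q) (hp : TauPath Tr p p') :
    ∃ q', TauPath Tr q q' ∧ sbis Tr p' q' := by
  induction hp with
  | refl => exact ⟨q, Relation.ReflTransGen.refl, h⟩
  | tail _ hstep ih =>
      obtain ⟨q', hq', hs⟩ := ih
      obtain ⟨q'', hq'', hs'⟩ := sbis_step hs hstep
      exact ⟨q'', hq'.tail hq'', hs'⟩

theorem sbis_stable {p q} (h : sbis Tr p q) (hs : Stable Tr p) : Stable Tr q := by
  rintro ⟨q', hq'⟩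
  obtain ⟨p', hp', -⟩ := sbis_step (sbis_symm h) hq'
  exact hs ⟨p', hp'⟩

theorem sbis_idle {p q} {X : Set A} (h : sbis Tr p q) (hi : Idle Tr p X) : Idle Tr q X := by
  refine ⟨sbis_stable h hi.1, fun a ha => ?_⟩
  rintro ⟨q', hq'⟩
  obtain ⟨p', hp', -⟩ := sbis_step (sbis_symm h) hq'
  exact hi.2 a ha ⟨p', hp'⟩

end helpers

theorem sbis_theta {C A : Type} {Tr : C → Act A → C → Prop} {theta : Set A → C → C}
    (htheta : ThetaSem Tr theta) {p q : C} (X : Set A) (h : sbis Tr p q) :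
    sbis Tr (theta X p) (theta X q) := by
  refine ⟨fun u v => (∃ X p q, sbis Tr p q ∧ u = theta X p ∧ v = theta X q) ∨ sbis Tr u v,
    ⟨?_, ?_⟩, Or.inl ⟨X, p, q, h, rfl, rfl⟩⟩
  · rintro u v (⟨X, p, q, h, rfl, rfl⟩ | h)
    · exact Or.inl ⟨X, q, p, sbis_symm h, rfl, rfl⟩
    · exact Or.inr (sbis_symm h)
  · rintro u v α u' (⟨X, p, q, h, rfl, rfl⟩ | h) ht
    · rcases (htheta X p α u').1 ht with ⟨rfl, P', hP', rfl⟩ | ⟨a, rfl, haX, hstep⟩ | ⟨hidle, hstep⟩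
      · obtain ⟨q', hq', hs⟩ := sbis_step h hP'
        exact ⟨theta X q', (htheta X q _ _).2 (Or.inl ⟨rfl, q', hq', rfl⟩),
          Or.inl ⟨X, P', q', hs, rfl, rfl⟩⟩
      · obtain ⟨q', hq', hs⟩ := sbis_step h hstep
        exact ⟨q', (htheta X q _ _).2 (Or.inr (Or.inl ⟨a, rfl, haX, hq'⟩)), Or.inr hs⟩
      · obtain ⟨q', hq', hs⟩ := sbis_step h hstep
        exact ⟨q', (htheta X q _ _).2 (Or.inr (Or.inr ⟨sbis_idle h hidle, hq'⟩)), Or.inr hs⟩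
    · obtain ⟨q', hq', hs⟩ := sbis_step h ht
      exact ⟨q', hq', Or.inr hs⟩

theorem UpToS_ext {S A : Type} {Tr : S → Act A → S → Prop} {B : S → S → Prop}
    {p p₀ q₀ q : S} (h1 : sbis Tr p p₀) (h : UpToS Tr B p₀ q₀) (h2 : sbis Tr q₀ q) :
    UpToS Tr B p q := by
  obtain ⟨a, b, ha, hab, hb⟩ := h
  exact ⟨a, b, sbis_trans h1 ha, hab, sbis_trans hb h2⟩

theorem cbtb_of_upto {C A : Type} {Tr : C → Act A → C → Prop} {theta : Set A → C → C}
    (htheta : ThetaSem Tr theta) {B : C → C → Prop} (hB : CBTBuptoS Tr theta B) :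
    CBTB Tr theta (UpToS Tr B) := by
  obtain ⟨hsymm, hc1, hc2, hc3⟩ := hB
  refine ⟨?_, ?_, ?_, ?_⟩
  · rintro p q ⟨a, b, ha, hab, hb⟩
    exact ⟨b, a, sbis_symm hb, hsymm hab, sbis_symm ha⟩
  · rintro p q α p' ⟨a, b, ha, hab, hb⟩ hne ht
    obtain ⟨a', ha', hsa⟩ := sbis_step ha ht
    obtain ⟨q1, q2, hpath, hopt, hu1, hu2⟩ := hc1 hab hne ha'
    obtain ⟨q1', hpath', hs1⟩ := sbis_tauPath hb hpath
    rcases hopt with ⟨rfl, rfl⟩ | hstep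
    · exact ⟨q1', q1', hpath', Or.inl ⟨rfl, rfl⟩,
        UpToS_ext ha hu1 hs1, UpToS_ext hsa hu2 hs1⟩
    · obtain ⟨q2', hq2', hs2⟩ := sbis_step hs1 hstep
      exact ⟨q1', q2', hpath', Or.inr hq2',
        UpToS_ext ha hu1 hs1, UpToS_ext hsa hu2 hs2⟩
  · rintro p q X p' ⟨a, b, ha, hab, hb⟩ hidle ht
    obtain ⟨a', ha', hsa⟩ := sbis_step ha ht
    obtain ⟨q1, q2, hpath, hstep, hu⟩ := hc2 X hab (sbis_idle ha hidle) ha'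
    obtain ⟨q1', hpath', hs1⟩ := sbis_tauPath hb hpath
    obtain ⟨q2', hq2', hs2⟩ := sbis_step hs1 hstep
    exact ⟨q1', q2', hpath', hq2',
      UpToS_ext (sbis_theta htheta X hsa) hu (sbis_theta htheta X hs2)⟩
  · rintro p q ⟨a, b, ha, hab, hb⟩ hst
    obtain ⟨q0, hpath, hq0⟩ := hc3 hab (sbis_stable ha hst)
    obtain ⟨q0', hpath', hs⟩ := sbis_tauPath hb hpath
    exact ⟨q0', hpath', sbis_stable hs hq0⟩


/-- Soundness of bisimulation up to strong bisimilarity. -/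
theorem stmt9 {C A : Type} (Tr : C → Act A → C → Prop) (theta : Set A → C → C)
    (htheta : ThetaSem Tr theta) :
    (∀ P Q : C, BisT Tr theta P Q ↔ ∃ B, CBTBuptoS Tr theta B ∧ B P Q) ∧
    (∀ B : C → C → Prop, CBTBuptoS Tr theta B → CBTB Tr theta (UpToS Tr B)) := by
  constructor
  · intro P Q
    constructor
    · rintro ⟨B, ⟨hsymm, hc1, hc2, hc3⟩, hPQ⟩
      refine ⟨B, ⟨hsymm, ?_, ?_, hc3⟩, hPQ⟩
      · intro p q α p' hpq hne ht
        obtain ⟨q1, q2, h1, h2, h3, h4⟩ := hc1 hpq hne ht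
        exact ⟨q1, q2, h1, h2, ⟨p, q1, sbis_refl p, h3, sbis_refl q1⟩,
          ⟨p', q2, sbis_refl p', h4, sbis_refl q2⟩⟩
      · intro p q X p' hpq hidle ht
        obtain ⟨q1, q2, h1, h2, h3⟩ := hc2 X hpq hidle ht
        exact ⟨q1, q2, h1, h2, ⟨_, _, sbis_refl _, h3, sbis_refl _⟩⟩
    · rintro ⟨B, hB, hPQ⟩
      exact ⟨UpToS Tr B, cbtb_of_upto htheta hB,
        ⟨P, Q, sbis_refl P, hPQ, sbis_refl Q⟩⟩
  · intro B hB
    exact cbtb_of_upto htheta hB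
end

section
/- If P and Q are tau-stable (i.e. no tau-transition from P leads to a state concrete branching reactive bisimilar to P, and likewise for Q) and P is concrete branching reactive bisimilar to Q, then P is rooted concrete branching reactive bisimilar to Q. -/
/-- A rooted concrete branching reactive bisimulation. -/
structure RCBRB {S A : Type} (Tr : S → Act A → S → Prop)
    (Rp : S → S → Prop) (Rt : S → Set A → S → Prop) : Prop where
  symm_p : ∀ {P Q}, Rp P Q → Rp Q P
  symm_t : ∀ {P X Q}, Rt P X Q → Rt Q X P
  r1a : ∀ {P Q α P'}, Rp P Q → α ≠ Act.to → Tr P α P' →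
    ∃ Q', Tr Q α Q' ∧ Bis Tr P' Q'
  r1b : ∀ {P Q} (Y : Set A), Rp P Q → Rt P Y Q
  r2a : ∀ {P X Q P'}, Rt P X Q → Tr P Act.tau P' →
    ∃ Q', Tr Q Act.tau Q' ∧ BisX Tr P' X Q'
  r2b : ∀ {P X Q a P'}, Rt P X Q → a ∈ X → Tr P (Act.vis a) P' →
    ∃ Q', Tr Q (Act.vis a) Q' ∧ Bis Tr P' Q'
  r2c : ∀ {P X Q}, Rt P X Q → Idle Tr P X → Rp P Q
  r2d : ∀ {P X Q P'}, Rt P X Q → Idle Tr P X → Tr P Act.to P' →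
    ∃ Q', Tr Q Act.to Q' ∧ BisX Tr P' X Q'

/-- Rooted concrete branching reactive bisimilarity. -/
def RBis {S A : Type} (Tr : S → Act A → S → Prop) (P Q : S) : Prop :=
  ∃ Rp Rt, RCBRB Tr Rp Rt ∧ Rp P Q

namespace Stmt10Aux

variable {C A : Type} {Tr : C → Act A → C → Prop}

lemma tau_ne_to : (Act.tau : Act A) ≠ Act.to := fun h => nomatch h
lemma vis_ne_to (a : A) : (Act.vis a : Act A) ≠ Act.to := fun h => nomatch h

lemma stable_path {p q : C} (hs : Stable Tr p) (h : TauPath Tr p q) : q = p := by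
  rcases Relation.ReflTransGen.cases_head h with h | ⟨r, hr, _⟩
  · exact h.symm
  · exact absurd ⟨r, hr⟩ hs

lemma id_cbrb : CBRB Tr (fun p q => p = q) (fun p _ q => p = q) where
  symm_p h := h.symm
  symm_t h := h.symm
  c1a := by
    intro P Q α P' h hα ht; subst h
    exact ⟨P, P', Relation.ReflTransGen.refl, Or.inr ht, rfl, rfl⟩
  c1b := by intro P Q Y h; exact h
  c2a := by
    intro P X Q P' h ht; subst h
    exact ⟨P, P', Relation.ReflTransGen.refl, Or.inr ht, rfl, rfl⟩
  c2b := by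
    intro P X Q a P' h ha ht; subst h
    exact ⟨P, P', Relation.ReflTransGen.refl, ht, rfl, rfl⟩
  c2c := by intro P X Q h hI; subst h; exact ⟨P, Relation.ReflTransGen.refl, rfl⟩
  c2d := by
    intro P X Q P' h hI ht; subst h
    exact ⟨P, P', Relation.ReflTransGen.refl, ht, rfl⟩
  c2e := by intro P X Q h hs; subst h; exact ⟨P, Relation.ReflTransGen.refl, hs⟩

lemma bis_refl (x : C) : Bis Tr x x := ⟨_, _, id_cbrb, rfl⟩
lemma bisX_refl (x : C) (X : Set A) : BisX Tr x X x := ⟨_, _, id_cbrb, rfl⟩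

lemma bis_symm {x y : C} (h : Bis Tr x y) : Bis Tr y x := by
  obtain ⟨Rp, Rt, hC, h⟩ := h; exact ⟨Rp, Rt, hC, hC.symm_p h⟩

lemma bisX_symm {x y : C} {X : Set A} (h : BisX Tr x X y) : BisX Tr y X x := by
  obtain ⟨Rp, Rt, hC, h⟩ := h; exact ⟨Rp, Rt, hC, hC.symm_t h⟩

/-- `Bis`/`BisX` themselves form a CBRB. -/
lemma bis_cbrb : CBRB Tr (Bis Tr) (BisX Tr) where
  symm_p := bis_symm
  symm_t := bisX_symm
  c1a := by
    intro P Q α P' ⟨Rp, Rt, hC, h⟩ hα ht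
    obtain ⟨Q1, Q2, p1, p2, h1, h2⟩ := hC.c1a h hα ht
    exact ⟨Q1, Q2, p1, p2, ⟨Rp, Rt, hC, h1⟩, ⟨Rp, Rt, hC, h2⟩⟩
  c1b := by
    intro P Q Y ⟨Rp, Rt, hC, h⟩
    exact ⟨Rp, Rt, hC, hC.c1b Y h⟩
  c2a := by
    intro P X Q P' ⟨Rp, Rt, hC, h⟩ ht
    obtain ⟨Q1, Q2, p1, p2, h1, h2⟩ := hC.c2a h ht
    exact ⟨Q1, Q2, p1, p2, ⟨Rp, Rt, hC, h1⟩, ⟨Rp, Rt, hC, h2⟩⟩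
  c2b := by
    intro P X Q a P' ⟨Rp, Rt, hC, h⟩ ha ht
    obtain ⟨Q1, Q2, p1, p2, h1, h2⟩ := hC.c2b h ha ht
    exact ⟨Q1, Q2, p1, p2, ⟨Rp, Rt, hC, h1⟩, ⟨Rp, Rt, hC, h2⟩⟩
  c2c := by
    intro P X Q ⟨Rp, Rt, hC, h⟩ hI
    obtain ⟨Q0, p0, h0⟩ := hC.c2c h hI
    exact ⟨Q0, p0, ⟨Rp, Rt, hC, h0⟩⟩
  c2d := by
    intro P X Q P' ⟨Rp, Rt, hC, h⟩ hI ht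
    obtain ⟨Q1, Q2, p1, p2, h2⟩ := hC.c2d h hI ht
    exact ⟨Q1, Q2, p1, p2, ⟨Rp, Rt, hC, h2⟩⟩
  c2e := by
    intro P X Q ⟨Rp, Rt, hC, h⟩ hs
    exact hC.c2e h hs

lemma bis_to_bisX {x y : C} (X : Set A) (h : Bis Tr x y) : BisX Tr x X y :=
  bis_cbrb.c1b X h

end Stmt10Aux
namespace Stmt10Aux
variable {C A : Type} {Tr : C → Act A → C → Prop}

lemma tau_match {y y1 : C} (h : TauPath Tr y y1) :
    ∀ z, Bis Tr y z → ∃ z1, TauPath Tr z z1 ∧ Bis Tr y1 z1 := by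
  induction h using Relation.ReflTransGen.head_induction_on with
  | refl => exact fun z hz => ⟨z, Relation.ReflTransGen.refl, hz⟩
  | head st rest ih =>
    intro z hz
    obtain ⟨Z1, Z2, p1, p2, _, h2⟩ := bis_cbrb.c1a hz tau_ne_to st
    have hp : TauPath Tr z Z2 := by
      rcases p2 with ⟨_, rfl⟩ | hstep
      · exact p1
      · exact p1.tail hstep
    obtain ⟨z1, q1, q2⟩ := ih Z2 h2
    exact ⟨z1, hp.trans q1, q2⟩

lemma tauX_match {y y1 : C} {X : Set A} (h : TauPath Tr y y1) :
    ∀ z, BisX Tr y X z → ∃ z1, TauPath Tr z z1 ∧ BisX Tr y1 X z1 := by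
  induction h using Relation.ReflTransGen.head_induction_on with
  | refl => exact fun z hz => ⟨z, Relation.ReflTransGen.refl, hz⟩
  | head st rest ih =>
    intro z hz
    obtain ⟨Z1, Z2, p1, p2, _, h2⟩ := bis_cbrb.c2a hz st
    have hp : TauPath Tr z Z2 := by
      rcases p2 with ⟨_, rfl⟩ | hstep
      · exact p1
      · exact p1.tail hstep
    obtain ⟨z1, q1, q2⟩ := ih Z2 h2
    exact ⟨z1, hp.trans q1, q2⟩

lemma stable_back {x : C} {X : Set A} (hs : Stable Tr x) {y y0 : C}
    (hp : TauPath Tr y y0) : BisX Tr x X y → BisX Tr x X y0 := by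
  induction hp using Relation.ReflTransGen.head_induction_on with
  | refl => exact id
  | head st rest ih =>
    intro h
    obtain ⟨X1, X2, p1, p2, _, h2⟩ := bis_cbrb.c2a (bisX_symm h) st
    have hX1 : X1 = x := stable_path hs p1
    subst hX1
    rcases p2 with ⟨_, rfl⟩ | hstep
    · exact ih (bisX_symm h2)
    · exact absurd ⟨X2, hstep⟩ hs

/-- Key lemma: if `x` is idle for `X` and `x ~_X y`, then `y` can reach by taus
a state that is idle for `X` and bisimilar to `x`. -/
lemma idle_match {x y : C} {X : Set A} (hI : Idle Tr x X) (h : BisX Tr x X y) :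
    ∃ y', TauPath Tr y y' ∧ BisX Tr x X y' ∧ Idle Tr y' X ∧ Bis Tr x y' := by
  obtain ⟨y0, py, st0⟩ := bis_cbrb.c2e h hI.1
  have h0 : BisX Tr x X y0 := stable_back hI.1 py h
  have hIy0 : Idle Tr y0 X := by
    refine ⟨st0, fun a ha ⟨w, hw⟩ => ?_⟩
    obtain ⟨x1, x2, p1, hstep, _, _⟩ := bis_cbrb.c2b (bisX_symm h0) ha hw
    have : x1 = x := stable_path hI.1 p1
    subst this
    exact hI.2 a ha ⟨x2, hstep⟩
  have hb : Bis Tr x y0 := by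
    obtain ⟨Q0, p0, hb⟩ := bis_cbrb.c2c h0 hI
    have : Q0 = y0 := stable_path st0 p0
    subst this; exact hb
  exact ⟨y0, py, h0, hIy0, hb⟩

end Stmt10Aux
namespace Stmt10Aux
variable {C A : Type} {Tr : C → Act A → C → Prop}

lemma comp_cbrb : CBRB Tr (fun x z => ∃ y, Bis Tr x y ∧ Bis Tr y z)
    (fun x X z => ∃ y, BisX Tr x X y ∧ BisX Tr y X z) where
  symm_p := fun ⟨y, h1, h2⟩ => ⟨y, bis_symm h2, bis_symm h1⟩
  symm_t := fun ⟨y, h1, h2⟩ => ⟨y, bisX_symm h2, bisX_symm h1⟩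
  c1a := by
    intro x z α x' ⟨y, hxy, hyz⟩ hα ht
    obtain ⟨y1, y2, p1, opt, h1, h2⟩ := bis_cbrb.c1a hxy hα ht
    obtain ⟨z1, q1, hy1z1⟩ := tau_match p1 z hyz
    rcases opt with ⟨hτ, heq⟩ | hstep
    · exact ⟨z1, z1, q1, Or.inl ⟨hτ, rfl⟩, ⟨y1, h1, hy1z1⟩, ⟨y2, h2, heq ▸ hy1z1⟩⟩
    · obtain ⟨z1', z2', p', opt', g1, g2⟩ := bis_cbrb.c1a hy1z1 hα hstep
      exact ⟨z1', z2', q1.trans p', opt', ⟨y1, h1, g1⟩, ⟨y2, h2, g2⟩⟩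
  c1b := fun Y ⟨y, h1, h2⟩ => ⟨y, bis_to_bisX Y h1, bis_to_bisX Y h2⟩
  c2a := by
    intro x X z x' ⟨y, hxy, hyz⟩ ht
    obtain ⟨y1, y2, p1, opt, h1, h2⟩ := bis_cbrb.c2a hxy ht
    obtain ⟨z1, q1, hy1z1⟩ := tauX_match p1 z hyz
    rcases opt with ⟨hτ, heq⟩ | hstep
    · exact ⟨z1, z1, q1, Or.inl ⟨hτ, rfl⟩, ⟨y1, h1, hy1z1⟩, ⟨y2, h2, heq ▸ hy1z1⟩⟩
    · obtain ⟨z1', z2', p', opt', g1, g2⟩ := bis_cbrb.c2a hy1z1 hstep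
      exact ⟨z1', z2', q1.trans p', opt', ⟨y1, h1, g1⟩, ⟨y2, h2, g2⟩⟩
  c2b := by
    intro x X z a x' ⟨y, hxy, hyz⟩ ha ht
    obtain ⟨y1, y2, p1, hstep, h1, h2⟩ := bis_cbrb.c2b hxy ha ht
    obtain ⟨z1, q1, hy1z1⟩ := tauX_match p1 z hyz
    obtain ⟨z1', z2', p', hstep', g1, g2⟩ := bis_cbrb.c2b hy1z1 ha hstep
    exact ⟨z1', z2', q1.trans p', hstep', ⟨y1, h1, g1⟩, ⟨y2, h2, g2⟩⟩
  c2c := by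
    intro x X z ⟨y, hxy, hyz⟩ hI
    obtain ⟨y', py, hxy', hIy', hbxy'⟩ := idle_match hI hxy
    obtain ⟨z', pz, hy'z'⟩ := tauX_match py z hyz
    obtain ⟨z'', pz2, _, _, hby'z''⟩ := idle_match hIy' hy'z'
    exact ⟨z'', pz.trans pz2, ⟨y', hbxy', hby'z''⟩⟩
  c2d := by
    intro x X z x' ⟨y, hxy, hyz⟩ hI ht
    obtain ⟨y', py, hxy', hIy', _⟩ := idle_match hI hxy
    obtain ⟨Y1, Y2, pY, stY, h2⟩ := bis_cbrb.c2d hxy' hI ht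
    have hY1 : Y1 = y' := stable_path hIy'.1 pY
    subst hY1
    obtain ⟨z', pz, hy'z'⟩ := tauX_match py z hyz
    obtain ⟨z'', pz2, hy'z'', hIz'', _⟩ := idle_match hIy' hy'z'
    obtain ⟨Z1, Z2, pZ, stZ, g2⟩ := bis_cbrb.c2d hy'z'' hIy' stY
    have hZ1 : Z1 = z'' := stable_path hIz''.1 pZ
    exact ⟨z'', Z2, pz.trans pz2, hZ1 ▸ stZ, ⟨Y2, h2, g2⟩⟩
  c2e := by
    intro x X z ⟨y, hxy, hyz⟩ hs
    obtain ⟨y0, py, st0⟩ := bis_cbrb.c2e hxy hs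
    obtain ⟨z', pz, hy0z'⟩ := tauX_match py z hyz
    obtain ⟨z0, pz0, stz0⟩ := bis_cbrb.c2e hy0z' st0
    exact ⟨z0, pz.trans pz0, stz0⟩

lemma bis_trans {x y z : C} (h1 : Bis Tr x y) (h2 : Bis Tr y z) : Bis Tr x z :=
  ⟨_, _, comp_cbrb, ⟨y, h1, h2⟩⟩

end Stmt10Aux
namespace Stmt10Aux
variable {C A : Type} {Tr : C → Act A → C → Prop}

/-- `y` lies on a tau-path from `x` to a state bisimilar to `x`. -/
def Dom (Tr : C → Act A → C → Prop) (x y : C) : Prop :=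
  ∃ z, TauPath Tr x y ∧ TauPath Tr y z ∧ Bis Tr x z

lemma stutter_cbrb : CBRB Tr (fun x y => Bis Tr x y ∨ Dom Tr x y ∨ Dom Tr y x)
    (fun x X y => BisX Tr x X y ∨ Dom Tr x y ∨ Dom Tr y x) where
  symm_p := fun h => by
    rcases h with h | h | h
    · exact Or.inl (bis_symm h)
    · exact Or.inr (Or.inr h)
    · exact Or.inr (Or.inl h)
  symm_t := fun h => by
    rcases h with h | h | h
    · exact Or.inl (bisX_symm h)
    · exact Or.inr (Or.inr h)
    · exact Or.inr (Or.inl h)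
  c1a := by
    intro x y α x' h hα ht
    rcases h with h | ⟨z, pxy, pyz, hb⟩ | ⟨z, pyx, pxz, hb⟩
    · obtain ⟨Q1, Q2, p1, p2, h1, h2⟩ := bis_cbrb.c1a h hα ht
      exact ⟨Q1, Q2, p1, p2, Or.inl h1, Or.inl h2⟩
    · obtain ⟨Z1, Z2, p1, p2, h1, h2⟩ := bis_cbrb.c1a hb hα ht
      exact ⟨Z1, Z2, pyz.trans p1, p2, Or.inl h1, Or.inl h2⟩
    · exact ⟨x, x', pyx, Or.inr ht, Or.inl (bis_refl x), Or.inl (bis_refl x')⟩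
  c1b := by
    intro x y Y h
    rcases h with h | h | h
    · exact Or.inl (bis_to_bisX Y h)
    · exact Or.inr (Or.inl h)
    · exact Or.inr (Or.inr h)
  c2a := by
    intro x X y x' h ht
    rcases h with h | ⟨z, pxy, pyz, hb⟩ | ⟨z, pyx, pxz, hb⟩
    · obtain ⟨Q1, Q2, p1, p2, h1, h2⟩ := bis_cbrb.c2a h ht
      exact ⟨Q1, Q2, p1, p2, Or.inl h1, Or.inl h2⟩
    · obtain ⟨Z1, Z2, p1, p2, h1, h2⟩ := bis_cbrb.c2a (bis_to_bisX X hb) ht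
      exact ⟨Z1, Z2, pyz.trans p1, p2, Or.inl h1, Or.inl h2⟩
    · exact ⟨x, x', pyx, Or.inr ht, Or.inl (bisX_refl x X), Or.inl (bisX_refl x' X)⟩
  c2b := by
    intro x X y a x' h ha ht
    rcases h with h | ⟨z, pxy, pyz, hb⟩ | ⟨z, pyx, pxz, hb⟩
    · obtain ⟨Q1, Q2, p1, p2, h1, h2⟩ := bis_cbrb.c2b h ha ht
      exact ⟨Q1, Q2, p1, p2, Or.inl h1, Or.inl h2⟩
    · obtain ⟨Z1, Z2, p1, p2, h1, h2⟩ := bis_cbrb.c2b (bis_to_bisX X hb) ha ht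
      exact ⟨Z1, Z2, pyz.trans p1, p2, Or.inl h1, Or.inl h2⟩
    · exact ⟨x, x', pyx, ht, Or.inl (bisX_refl x X), Or.inl (bis_refl x')⟩
  c2c := by
    intro x X y h hI
    rcases h with h | ⟨z, pxy, pyz, hb⟩ | ⟨z, pyx, pxz, hb⟩
    · obtain ⟨Q0, p0, h0⟩ := bis_cbrb.c2c h hI
      exact ⟨Q0, p0, Or.inl h0⟩
    · have hyx : y = x := stable_path hI.1 pxy
      subst hyx
      exact ⟨y, Relation.ReflTransGen.refl, Or.inl (bis_refl y)⟩
    · exact ⟨x, pyx, Or.inl (bis_refl x)⟩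
  c2d := by
    intro x X y x' h hI ht
    rcases h with h | ⟨z, pxy, pyz, hb⟩ | ⟨z, pyx, pxz, hb⟩
    · obtain ⟨Q1, Q2, p1, p2, h2⟩ := bis_cbrb.c2d h hI ht
      exact ⟨Q1, Q2, p1, p2, Or.inl h2⟩
    · have hyx : y = x := stable_path hI.1 pxy
      subst hyx
      exact ⟨y, x', Relation.ReflTransGen.refl, ht, Or.inl (bisX_refl x' X)⟩
    · exact ⟨x, x', pyx, ht, Or.inl (bisX_refl x' X)⟩
  c2e := by
    intro x X y h hs
    rcases h with h | ⟨z, pxy, pyz, hb⟩ | ⟨z, pyx, pxz, hb⟩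
    · exact bis_cbrb.c2e h hs
    · have hyx : y = x := stable_path hs pxy
      subst hyx
      exact ⟨y, Relation.ReflTransGen.refl, hs⟩
    · exact ⟨x, pyx, hs⟩

/-- Stuttering: intermediate states on a tau-path between bisimilar states are
bisimilar to the endpoints. -/
lemma stutter {x z r : C} (h : Bis Tr x z) (p1 : TauPath Tr x r)
    (p2 : TauPath Tr r z) : Bis Tr x r :=
  ⟨_, _, stutter_cbrb, Or.inr (Or.inl ⟨z, p1, p2, h⟩)⟩

end Stmt10Aux
namespace Stmt10Aux
variable {C A : Type} {Tr : C → Act A → C → Prop}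

/-- A tau-stable state bisimilar to a tau-inert state has no tau-transitions. -/
lemma stable_of_bis_stable {P Q : C} (hsP : Stable Tr P) (h : Bis Tr P Q)
    (hQ : ∀ R, Tr Q Act.tau R → ¬ Bis Tr Q R) : Stable Tr Q := by
  rintro ⟨R, hR⟩
  obtain ⟨P1, P2, p1, p2, _, h2⟩ := bis_cbrb.c1a (bis_symm h) tau_ne_to hR
  have hP1 : P1 = P := stable_path hsP p1
  have hP2 : P2 = P := by
    rcases p2 with ⟨_, heq⟩ | hstep
    · exact heq.symm.trans hP1
    · rw [hP1] at hstep
      exact absurd ⟨P2, hstep⟩ hsP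
  exact hQ R hR (bis_trans (bis_symm h) (bis_symm (hP2 ▸ h2)))

/-- Strong matching of visible/tau moves between tau-stable bisimilar states. -/
lemma strong_match {P Q : C} (hP : ∀ P', Tr P Act.tau P' → ¬ Bis Tr P P')
    (hQ : ∀ Q', Tr Q Act.tau Q' → ¬ Bis Tr Q Q') (h : Bis Tr P Q)
    {α : Act A} {P' : C} (hα : α ≠ Act.to) (ht : Tr P α P') :
    ∃ Q', Tr Q α Q' ∧ Bis Tr P' Q' := by
  obtain ⟨Q1, Q2, p1, opt, h1, h2⟩ := bis_cbrb.c1a h hα ht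
  have hQQ1 : Bis Tr Q Q1 := bis_trans (bis_symm h) h1
  have hQ1 : Q1 = Q := by
    rcases Relation.ReflTransGen.cases_head p1 with heq | ⟨R, hst, rest⟩
    · exact heq.symm
    · exact absurd (stutter hQQ1 (Relation.ReflTransGen.single hst) rest) (hQ R hst)
  subst hQ1
  rcases opt with ⟨hτ, heq⟩ | hstep
  · subst hτ
    exact absurd (bis_trans h (bis_symm (heq ▸ h2))) (hP P' ht)
  · exact ⟨Q2, hstep, h2⟩

/-- Strong matching of timeout moves from an idle state. -/
lemma to_match {P Q : C} (hQ : ∀ Q', Tr Q Act.tau Q' → ¬ Bis Tr Q Q')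
    (h : Bis Tr P Q) {X : Set A} {P' : C} (hI : Idle Tr P X)
    (ht : Tr P Act.to P') : ∃ Q', Tr Q Act.to Q' ∧ BisX Tr P' X Q' := by
  have hsQ : Stable Tr Q := stable_of_bis_stable hI.1 h hQ
  obtain ⟨Q1, Q2, p1, hstep, h2⟩ := bis_cbrb.c2d (bis_to_bisX X h) hI ht
  have hQ1 : Q1 = Q := stable_path hsQ p1
  exact ⟨Q2, hQ1 ▸ hstep, h2⟩

end Stmt10Aux

/-- If `P` and `Q` are tau-stable and `P ~ Q`, then `P ~r Q`. -/
theorem stmt10 {C A : Type} (Tr : C → Act A → C → Prop) (P Q : C)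
    (hP : ∀ P', Tr P Act.tau P' → ¬ Bis Tr P P')
    (hQ : ∀ Q', Tr Q Act.tau Q' → ¬ Bis Tr Q Q')
    (h : Bis Tr P Q) :
    RBis Tr P Q := by
  open Stmt10Aux in
  refine ⟨fun x y => (x = P ∧ y = Q) ∨ (x = Q ∧ y = P),
    fun x _ y => (x = P ∧ y = Q) ∨ (x = Q ∧ y = P), ?_, Or.inl ⟨rfl, rfl⟩⟩
  have key : ∀ {x y : C} {α : Act A} {x' : C},
      ((x = P ∧ y = Q) ∨ (x = Q ∧ y = P)) → α ≠ Act.to → Tr x α x' →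
      ∃ y', Tr y α y' ∧ Bis Tr x' y' := by
    rintro x y α x' (⟨rfl, rfl⟩ | ⟨rfl, rfl⟩) hα ht
    · exact strong_match hP hQ h hα ht
    · exact strong_match hQ hP (bis_symm h) hα ht
  have keyt : ∀ {x y : C} {X : Set A} {x' : C},
      ((x = P ∧ y = Q) ∨ (x = Q ∧ y = P)) → Idle Tr x X → Tr x Act.to x' →
      ∃ y', Tr y Act.to y' ∧ BisX Tr x' X y' := by
    rintro x y X x' (⟨rfl, rfl⟩ | ⟨rfl, rfl⟩) hI ht
    · exact to_match hQ h hI ht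
    · exact to_match hP (bis_symm h) hI ht
  refine { symm_p := ?_, symm_t := ?_, r1a := ?_, r1b := ?_, r2a := ?_,
           r2b := ?_, r2c := ?_, r2d := ?_ }
  · rintro x y (⟨rfl, rfl⟩ | ⟨rfl, rfl⟩)
    · exact Or.inr ⟨rfl, rfl⟩
    · exact Or.inl ⟨rfl, rfl⟩
  · rintro x X y (⟨rfl, rfl⟩ | ⟨rfl, rfl⟩)
    · exact Or.inr ⟨rfl, rfl⟩
    · exact Or.inl ⟨rfl, rfl⟩
  · exact fun hr hα ht => key hr hα ht
  · exact fun _ hr => hr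
  · intro x X y x' hr ht
    obtain ⟨y', hst, hb⟩ := key hr tau_ne_to ht
    exact ⟨y', hst, bis_to_bisX X hb⟩
  · intro x X y a x' hr ha ht
    exact key hr (vis_ne_to a) ht
  · exact fun hr _ => hr
  · exact fun hr hI ht => keyt hr hI ht
end

section
/- The law Lτ is sound for rooted concrete branching reactive bisimilarity: for all processes P and Q, tau.P + t.Q is rooted concrete branching reactive bisimilar to tau.P. -/
/-- Semantics of action prefixing: `α.P -β-> Q` iff `β = α` and `Q = P`. -/
def PrefixSem {C A : Type} (Tr : C → Act A → C → Prop) (pre : Act A → C → C) : Prop :=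
  ∀ (α : Act A) (P : C) (β : Act A) (Q : C), Tr (pre α P) β Q ↔ β = α ∧ Q = P

/-- Semantics of choice: `P + Q -α-> R` iff `P -α-> R` or `Q -α-> R`. -/
def ChoiceSem {C A : Type} (Tr : C → Act A → C → Prop) (plus : C → C → C) : Prop :=
  ∀ (P Q : C) (α : Act A) (R : C), Tr (plus P Q) α R ↔ Tr P α R ∨ Tr Q α R

lemma cbrb_id {S A : Type} (Tr : S → Act A → S → Prop) :
    CBRB Tr (fun p q => p = q) (fun p _ q => p = q) where
  symm_p := fun h => h.symm
  symm_t := fun h => h.symm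
  c1a := fun {P Q α P'} h _ hT =>
    ⟨Q, P', Relation.ReflTransGen.refl, Or.inr (h ▸ hT), h, rfl⟩
  c1b := fun _ h => h
  c2a := fun {P X Q P'} h hT =>
    ⟨Q, P', Relation.ReflTransGen.refl, Or.inr (h ▸ hT), h, rfl⟩
  c2b := fun {P X Q a P'} h _ hT =>
    ⟨Q, P', Relation.ReflTransGen.refl, h ▸ hT, h, rfl⟩
  c2c := fun h _ => ⟨_, Relation.ReflTransGen.refl, h⟩
  c2d := fun {P X Q P'} h _ hT =>
    ⟨Q, P', Relation.ReflTransGen.refl, h ▸ hT, rfl⟩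
  c2e := fun {P X Q} h hS => ⟨Q, Relation.ReflTransGen.refl, h ▸ hS⟩

lemma bis_refl {S A : Type} (Tr : S → Act A → S → Prop) (P : S) : Bis Tr P P :=
  ⟨_, _, cbrb_id Tr, rfl⟩

lemma bisX_refl {S A : Type} (Tr : S → Act A → S → Prop) (P : S) (X : Set A) :
    BisX Tr P X P :=
  ⟨_, _, cbrb_id Tr, rfl⟩

/-- Soundness of the law Lτ: `tau.P + t.Q ~r tau.P`. -/
theorem stmt11 {C A : Type} (Tr : C → Act A → C → Prop)
    (pre : Act A → C → C) (plus : C → C → C)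
    (hpre : PrefixSem Tr pre) (hplus : ChoiceSem Tr plus)
    (P Q : C) :
    RBis Tr (plus (pre Act.tau P) (pre Act.to Q)) (pre Act.tau P) := by
  set L := plus (pre Act.tau P) (pre Act.to Q) with hL
  set R := pre Act.tau P with hR
  -- transitions of L and R
  have hRtau : Tr R Act.tau P := (hpre Act.tau P Act.tau P).2 ⟨rfl, rfl⟩
  have hLtau : Tr L Act.tau P := (hplus _ _ _ _).2 (Or.inl hRtau)
  have invL : ∀ α P', Tr L α P' → (α = Act.tau ∧ P' = P) ∨ (α = Act.to ∧ P' = Q) := by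
    intro α P' h
    rcases (hplus _ _ _ _).1 h with h | h
    · exact Or.inl ((hpre _ _ _ _).1 h)
    · exact Or.inr ((hpre _ _ _ _).1 h)
  have invR : ∀ α P', Tr R α P' → α = Act.tau ∧ P' = P := fun α P' h =>
    (hpre _ _ _ _).1 h
  refine ⟨fun x y => x = y ∨ (x = L ∧ y = R) ∨ (x = R ∧ y = L),
          fun x _ y => x = y ∨ (x = L ∧ y = R) ∨ (x = R ∧ y = L), ?_,
          Or.inr (Or.inl ⟨rfl, rfl⟩)⟩
  have step : ∀ {P₀ Q₀ α P'},
      (P₀ = Q₀ ∨ (P₀ = L ∧ Q₀ = R) ∨ (P₀ = R ∧ Q₀ = L)) → α ≠ Act.to →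
      Tr P₀ α P' → ∃ Q', Tr Q₀ α Q' ∧ P' = Q' := by
    intro P₀ Q₀ α P' h hα hT
    rcases h with rfl | ⟨rfl, rfl⟩ | ⟨rfl, rfl⟩
    · exact ⟨P', hT, rfl⟩
    · rcases invL α P' hT with ⟨rfl, h2⟩ | ⟨rfl, _⟩
      · exact ⟨P, hRtau, h2⟩
      · exact absurd rfl hα
    · rcases invR α P' hT with ⟨rfl, h2⟩
      exact ⟨P, hLtau, h2⟩
  refine
    { symm_p := ?_, symm_t := ?_, r1a := ?_, r1b := ?_, r2a := ?_, r2b := ?_,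
      r2c := ?_, r2d := ?_ }
  · rintro P₀ Q₀ (rfl | ⟨rfl, rfl⟩ | ⟨rfl, rfl⟩)
    · exact Or.inl rfl
    · exact Or.inr (Or.inr ⟨rfl, rfl⟩)
    · exact Or.inr (Or.inl ⟨rfl, rfl⟩)
  · rintro P₀ X Q₀ (rfl | ⟨rfl, rfl⟩ | ⟨rfl, rfl⟩)
    · exact Or.inl rfl
    · exact Or.inr (Or.inr ⟨rfl, rfl⟩)
    · exact Or.inr (Or.inl ⟨rfl, rfl⟩)
  · intro P₀ Q₀ α P' h hα hT
    obtain ⟨Q', hQ', rfl⟩ := step h hα hT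
    exact ⟨P', hQ', bis_refl Tr P'⟩
  · exact fun _ h => h
  · intro P₀ X Q₀ P' h hT
    obtain ⟨Q', hQ', rfl⟩ := step h (by simp) hT
    exact ⟨P', hQ', bisX_refl Tr P' X⟩
  · intro P₀ X Q₀ a P' h _ hT
    obtain ⟨Q', hQ', rfl⟩ := step h (by simp) hT
    exact ⟨P', hQ', bis_refl Tr P'⟩
  · intro P₀ X Q₀ h hIdle
    rcases h with rfl | ⟨rfl, rfl⟩ | ⟨rfl, rfl⟩
    · exact Or.inl rfl
    · exact absurd ⟨P, hLtau⟩ hIdle.1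
    · exact absurd ⟨P, hRtau⟩ hIdle.1
  · intro P₀ X Q₀ P' h hIdle hT
    rcases h with rfl | ⟨rfl, rfl⟩ | ⟨rfl, rfl⟩
    · exact ⟨P', hT, bisX_refl Tr P' X⟩
    · exact absurd ⟨P, hLtau⟩ hIdle.1
    · exact absurd ⟨P, hRtau⟩ hIdle.1
end

section
/- The branching axiom is sound for rooted concrete branching reactive bisimilarity: for all processes P and Q and every action α ∈ A ∪ {tau, t}, the process α.(tau.(P+Q) + P) is rooted concrete branching reactive bisimilar to α.(P+Q). -/
def Rp0 {C : Type} (L R : C) : C → C → Prop :=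
  fun x y => x = y ∨ (x = L ∧ y = R) ∨ (x = R ∧ y = L)

lemma core_cbrb {C A : Type} (Tr : C → Act A → C → Prop)
    (pre : Act A → C → C) (plus : C → C → C)
    (hpre : PrefixSem Tr pre) (hplus : ChoiceSem Tr plus) (P Q : C) :
    CBRB Tr (Rp0 (plus (pre Act.tau (plus P Q)) P) (plus P Q))
      (fun p _ q => Rp0 (plus (pre Act.tau (plus P Q)) P) (plus P Q) p q) := by
  set L := plus (pre Act.tau (plus P Q)) P with hLdef
  set R := plus P Q with hRdef
  have hLR : Tr L Act.tau R := by
    rw [hLdef, hplus]; left; rw [hpre]; exact ⟨rfl, rfl⟩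
  have hLtrans : ∀ β X, Tr L β X ↔ (β = Act.tau ∧ X = R) ∨ Tr P β X := by
    intro β X; rw [hLdef, hplus, hpre]
  have hRtrans : ∀ β X, Tr R β X ↔ Tr P β X ∨ Tr Q β X := by
    intro β X; rw [hRdef, hplus]
  have hsymm : ∀ {x y}, Rp0 L R x y → Rp0 L R y x := by
    rintro x y (rfl | ⟨rfl, rfl⟩ | ⟨rfl, rfl⟩)
    · exact Or.inl rfl
    · exact Or.inr (Or.inr ⟨rfl, rfl⟩)
    · exact Or.inr (Or.inl ⟨rfl, rfl⟩)
  have hLnotStable : ¬ Stable Tr L := fun h => h ⟨R, hLR⟩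
  -- main transfer lemma
  have main : ∀ {p q β p'}, Rp0 L R p q → Tr p β p' →
      ∃ q1 q2, TauPath Tr q q1 ∧ ((β = Act.tau ∧ q1 = q2) ∨ Tr q1 β q2)
        ∧ Rp0 L R p q1 ∧ Rp0 L R p' q2 := by
    rintro p q β p' (rfl | ⟨rfl, rfl⟩ | ⟨rfl, rfl⟩) hstep
    · exact ⟨p, p', Relation.ReflTransGen.refl, Or.inr hstep, Or.inl rfl, Or.inl rfl⟩
    · rcases (hLtrans β p').1 hstep with ⟨rfl, rfl⟩ | hP
      · exact ⟨R, R, Relation.ReflTransGen.refl, Or.inl ⟨rfl, rfl⟩,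
          Or.inr (Or.inl ⟨rfl, rfl⟩), Or.inl rfl⟩
      · exact ⟨R, p', Relation.ReflTransGen.refl, Or.inr ((hRtrans β p').2 (Or.inl hP)),
          Or.inr (Or.inl ⟨rfl, rfl⟩), Or.inl rfl⟩
    · rcases (hRtrans β p').1 hstep with hP | hQ
      · exact ⟨L, p', Relation.ReflTransGen.refl,
          Or.inr ((hLtrans β p').2 (Or.inr hP)),
          Or.inr (Or.inr ⟨rfl, rfl⟩), Or.inl rfl⟩
      · exact ⟨R, p', Relation.ReflTransGen.single hLR,
          Or.inr ((hRtrans β p').2 (Or.inr hQ)), Or.inl rfl, Or.inl rfl⟩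
  refine ⟨fun h => hsymm h, fun h => hsymm h, ?_, ?_, ?_, ?_, ?_, ?_, ?_⟩
  · -- c1a
    intro p q β p' hR _ hstep
    obtain ⟨q1, q2, hpath, hopt, h1, h2⟩ := main hR hstep
    exact ⟨q1, q2, hpath, hopt, h1, h2⟩
  · intro p q _ h; exact h
  · -- c2a
    intro p X q p' hR hstep
    obtain ⟨q1, q2, hpath, hopt, h1, h2⟩ := main hR hstep
    exact ⟨q1, q2, hpath, hopt, h1, h2⟩
  · -- c2b
    intro p X q a p' hR _ hstep
    obtain ⟨q1, q2, hpath, hopt, h1, h2⟩ := main hR hstep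
    rcases hopt with ⟨h, _⟩ | hstep'
    · exact absurd h (by simp)
    · exact ⟨q1, q2, hpath, hstep', h1, h2⟩
  · -- c2c
    rintro p X q (rfl | ⟨rfl, rfl⟩ | ⟨rfl, rfl⟩) hidle
    · exact ⟨p, Relation.ReflTransGen.refl, Or.inl rfl⟩
    · exact absurd hidle.1 hLnotStable
    · exact ⟨R, Relation.ReflTransGen.single hLR, Or.inl rfl⟩
  · -- c2d
    rintro p X q p' hR hidle hstep
    obtain ⟨q1, q2, hpath, hopt, h1, h2⟩ := main hR hstep
    rcases hopt with ⟨h, _⟩ | hstep'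
    · exact absurd h (by simp)
    · exact ⟨q1, q2, hpath, hstep', h2⟩
  · -- c2e
    rintro p X q (rfl | ⟨rfl, rfl⟩ | ⟨rfl, rfl⟩) hstab
    · exact ⟨p, Relation.ReflTransGen.refl, hstab⟩
    · exact absurd hstab hLnotStable
    · exact ⟨R, Relation.ReflTransGen.single hLR, hstab⟩

lemma core_bis {C A : Type} (Tr : C → Act A → C → Prop)
    (pre : Act A → C → C) (plus : C → C → C)
    (hpre : PrefixSem Tr pre) (hplus : ChoiceSem Tr plus) (P Q : C) :
    Bis Tr (plus (pre Act.tau (plus P Q)) P) (plus P Q) :=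
  ⟨_, _, core_cbrb Tr pre plus hpre hplus P Q, Or.inr (Or.inl ⟨rfl, rfl⟩)⟩

lemma core_bis' {C A : Type} (Tr : C → Act A → C → Prop)
    (pre : Act A → C → C) (plus : C → C → C)
    (hpre : PrefixSem Tr pre) (hplus : ChoiceSem Tr plus) (P Q : C) :
    Bis Tr (plus P Q) (plus (pre Act.tau (plus P Q)) P) :=
  ⟨_, _, core_cbrb Tr pre plus hpre hplus P Q, Or.inr (Or.inr ⟨rfl, rfl⟩)⟩

lemma core_bisX {C A : Type} (Tr : C → Act A → C → Prop)
    (pre : Act A → C → C) (plus : C → C → C)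
    (hpre : PrefixSem Tr pre) (hplus : ChoiceSem Tr plus) (P Q : C) (X : Set A) :
    BisX Tr (plus (pre Act.tau (plus P Q)) P) X (plus P Q) :=
  ⟨_, _, core_cbrb Tr pre plus hpre hplus P Q, Or.inr (Or.inl ⟨rfl, rfl⟩)⟩

lemma core_bisX' {C A : Type} (Tr : C → Act A → C → Prop)
    (pre : Act A → C → C) (plus : C → C → C)
    (hpre : PrefixSem Tr pre) (hplus : ChoiceSem Tr plus) (P Q : C) (X : Set A) :
    BisX Tr (plus P Q) X (plus (pre Act.tau (plus P Q)) P) :=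
  ⟨_, _, core_cbrb Tr pre plus hpre hplus P Q, Or.inr (Or.inr ⟨rfl, rfl⟩)⟩

/-- Soundness of the branching axiom: `α.(tau.(P+Q) + P) ~r α.(P+Q)`. -/
theorem stmt12 {C A : Type} (Tr : C → Act A → C → Prop)
    (pre : Act A → C → C) (plus : C → C → C)
    (hpre : PrefixSem Tr pre) (hplus : ChoiceSem Tr plus)
    (P Q : C) (α : Act A) :
    RBis Tr (pre α (plus (pre Act.tau (plus P Q)) P)) (pre α (plus P Q)) := by
  set L := plus (pre Act.tau (plus P Q)) P with hLdef
  set R := plus P Q with hRdef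
  have hbis : Bis Tr L R := core_bis Tr pre plus hpre hplus P Q
  have hbis' : Bis Tr R L := core_bis' Tr pre plus hpre hplus P Q
  have hbisX : ∀ X : Set A, BisX Tr L X R := core_bisX Tr pre plus hpre hplus P Q
  have hbisX' : ∀ X : Set A, BisX Tr R X L := core_bisX' Tr pre plus hpre hplus P Q
  refine ⟨fun x y => (x = pre α L ∧ y = pre α R) ∨ (x = pre α R ∧ y = pre α L),
    fun x _ y => (x = pre α L ∧ y = pre α R) ∨ (x = pre α R ∧ y = pre α L),
    ⟨?_, ?_, ?_, ?_, ?_, ?_, ?_, ?_⟩, Or.inl ⟨rfl, rfl⟩⟩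
  · rintro x y (⟨rfl, rfl⟩ | ⟨rfl, rfl⟩)
    · exact Or.inr ⟨rfl, rfl⟩
    · exact Or.inl ⟨rfl, rfl⟩
  · rintro x X y (⟨rfl, rfl⟩ | ⟨rfl, rfl⟩)
    · exact Or.inr ⟨rfl, rfl⟩
    · exact Or.inl ⟨rfl, rfl⟩
  · -- r1a
    rintro x y β x' (⟨rfl, rfl⟩ | ⟨rfl, rfl⟩) hne hstep
    · rcases (hpre α L β x').1 hstep with ⟨rfl, rfl⟩
      exact ⟨R, (hpre β R β R).2 ⟨rfl, rfl⟩, hbis⟩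
    · rcases (hpre α R β x').1 hstep with ⟨rfl, rfl⟩
      exact ⟨L, (hpre β L β L).2 ⟨rfl, rfl⟩, hbis'⟩
  · rintro x y _ h; exact h
  · -- r2a
    rintro x X y x' (⟨rfl, rfl⟩ | ⟨rfl, rfl⟩) hstep
    · rcases (hpre α L Act.tau x').1 hstep with ⟨heq, rfl⟩
      subst heq
      exact ⟨R, (hpre Act.tau R Act.tau R).2 ⟨rfl, rfl⟩, hbisX X⟩
    · rcases (hpre α R Act.tau x').1 hstep with ⟨heq, rfl⟩
      subst heq
      exact ⟨L, (hpre Act.tau L Act.tau L).2 ⟨rfl, rfl⟩, hbisX' X⟩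
  · -- r2b
    rintro x X y a x' (⟨rfl, rfl⟩ | ⟨rfl, rfl⟩) _ hstep
    · rcases (hpre α L (Act.vis a) x').1 hstep with ⟨heq, rfl⟩
      subst heq
      exact ⟨R, (hpre (Act.vis a) R (Act.vis a) R).2 ⟨rfl, rfl⟩, hbis⟩
    · rcases (hpre α R (Act.vis a) x').1 hstep with ⟨heq, rfl⟩
      subst heq
      exact ⟨L, (hpre (Act.vis a) L (Act.vis a) L).2 ⟨rfl, rfl⟩, hbis'⟩
  · -- r2c
    rintro x X y h _; exact h
  · -- r2d
    rintro x X y x' (⟨rfl, rfl⟩ | ⟨rfl, rfl⟩) _ hstep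
    · rcases (hpre α L Act.to x').1 hstep with ⟨heq, rfl⟩
      subst heq
      exact ⟨R, (hpre Act.to R Act.to R).2 ⟨rfl, rfl⟩, hbisX X⟩
    · rcases (hpre α R Act.to x').1 hstep with ⟨heq, rfl⟩
      subst heq
      exact ⟨L, (hpre Act.to L Act.to L).2 ⟨rfl, rfl⟩, hbisX' X⟩
end

section
/- Soundness of the reactive approximation axiom: if ψ_X(P) is rooted concrete branching reactive bisimilar to ψ_X(Q) for every X ⊆ A, then P is rooted concrete branching reactive bisimilar to Q. -/
/-- Semantics of the operator `ψ_X`: `ψ_X(P) -α-> P'` iff `P -α-> P'` and `α ≠ t`;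
`ψ_X(P) -t-> θ_X(P')` iff `P -t-> P'` and `I(P) ∩ (X ∪ {tau}) = ∅`. -/
def PsiSem {C A : Type} (Tr : C → Act A → C → Prop)
    (theta psi : Set A → C → C) : Prop :=
  ∀ (X : Set A) (P : C) (α : Act A) (Q' : C),
    Tr (psi X P) α Q' ↔
      ((α ≠ Act.to ∧ Tr P α Q') ∨
       (α = Act.to ∧ Idle Tr P X ∧ ∃ P', Tr P Act.to P' ∧ Q' = theta X P'))

/-- A rooted concrete branching time-out bisimulation. -/
def RCBTB {C A : Type} (Tr : C → Act A → C → Prop) (theta : Set A → C → C)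
    (B : C → C → Prop) : Prop :=
  (∀ {p q}, B p q → B q p) ∧
  (∀ {p q α p'}, B p q → α ≠ Act.to → Tr p α p' →
     ∃ q', Tr q α q' ∧ Bis Tr p' q') ∧
  (∀ {p q} (X : Set A), ∀ {p'}, B p q → Idle Tr p X → Tr p Act.to p' →
     ∃ q', Tr q Act.to q' ∧ Bis Tr (theta X p') (theta X q'))

/-- Rooted concrete branching reactive bisimilarity, characterised via rooted concrete
branching time-out bisimulations. -/
def RTBis {C A : Type} (Tr : C → Act A → C → Prop) (theta : Set A → C → C)
    (p q : C) : Prop :=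
  ∃ B, RCBTB Tr theta B ∧ B p q

section Aux

variable {C A : Type} {Tr : C → Act A → C → Prop} {theta : Set A → C → C}

/-- The squashing relation: identity, together with pairs `θ_X(θ_X p) / θ_X p`
(in both orientations). This is a strong bisimulation. -/
def Sq (theta : Set A → C → C) (X : Set A) (r s : C) : Prop :=
  r = s ∨ (∃ p, r = theta X (theta X p) ∧ s = theta X p)
        ∨ (∃ p, s = theta X (theta X p) ∧ r = theta X p)

lemma sq_symm {X : Set A} {r s : C} (h : Sq theta X r s) : Sq theta X s r := by
  rcases h with rfl | h | h
  · exact Or.inl rfl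
  · exact Or.inr (Or.inr h)
  · exact Or.inr (Or.inl h)

lemma theta_tau (htheta : ThetaSem Tr theta) {X : Set A} {p r : C} :
    Tr (theta X p) Act.tau r ↔ ∃ p', Tr p Act.tau p' ∧ r = theta X p' := by
  rw [htheta]
  constructor
  · rintro (⟨_, hp⟩ | ⟨a, ha, _⟩ | ⟨hid, htr⟩)
    · exact hp
    · cases ha
    · exact absurd ⟨r, htr⟩ hid.1
  · intro hp; exact Or.inl ⟨rfl, hp⟩

lemma theta_idle (htheta : ThetaSem Tr theta) {X : Set A} {p : C} (h : Idle Tr p X) : Idle Tr (theta X p) X := by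
  constructor
  · rintro ⟨r, hr⟩
    obtain ⟨p', hp', -⟩ := (theta_tau htheta).mp hr
    exact h.1 ⟨p', hp'⟩
  · rintro a haX ⟨r, hr⟩
    rcases (htheta X p (Act.vis a) r).mp hr with ⟨ha, -⟩ | ⟨a', ha', haX', htr⟩ | ⟨-, htr⟩
    · cases ha
    · cases ha'; exact h.2 a haX ⟨r, htr⟩
    · exact h.2 a haX ⟨r, htr⟩

/-- One-step transfer: `Sq` is a strong bisimulation. -/
lemma sq_step (htheta : ThetaSem Tr theta) {X : Set A} {r s r' : C} {α : Act A}
    (h : Sq theta X r s) (ht : Tr r α r') :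
    ∃ s', Tr s α s' ∧ Sq theta X r' s' := by
  rcases h with rfl | ⟨p, rfl, rfl⟩ | ⟨p, rfl, rfl⟩
  · exact ⟨r', ht, Or.inl rfl⟩
  · -- r = θ(θ p), s = θ p
    rcases (htheta X (theta X p) α r').mp ht with ⟨rfl, P', hP', rfl⟩ | ⟨a, rfl, haX, htr⟩ | ⟨-, htr⟩
    · obtain ⟨p', hp', rfl⟩ := (theta_tau htheta).mp hP'
      exact ⟨theta X p', (theta_tau htheta).mpr ⟨p', hp', rfl⟩,
        Or.inr (Or.inl ⟨p', rfl, rfl⟩)⟩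
    · exact ⟨r', htr, Or.inl rfl⟩
    · exact ⟨r', htr, Or.inl rfl⟩
  · -- r = θ p, s = θ(θ p)
    rcases (htheta X p α r').mp ht with ⟨rfl, P', hP', rfl⟩ | ⟨a, rfl, haX, htr⟩ | ⟨hid, htr⟩
    · exact ⟨theta X (theta X P'),
        (theta_tau htheta).mpr ⟨theta X P', (theta_tau htheta).mpr ⟨P', hP', rfl⟩, rfl⟩,
        Or.inr (Or.inr ⟨P', rfl, rfl⟩)⟩
    · exact ⟨r', (htheta X (theta X p) (Act.vis a) r').mpr
        (Or.inr (Or.inl ⟨a, rfl, haX, ht⟩)), Or.inl rfl⟩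
    · exact ⟨r', (htheta X (theta X p) α r').mpr
        (Or.inr (Or.inr ⟨theta_idle htheta hid, ht⟩)), Or.inl rfl⟩

lemma sq_path (htheta : ThetaSem Tr theta) {X : Set A} {r s r'' : C}
    (h : Sq theta X r s) (hp : TauPath Tr r r'') :
    ∃ s'', TauPath Tr s s'' ∧ Sq theta X r'' s'' := by
  induction hp with
  | refl => exact ⟨s, Relation.ReflTransGen.refl, h⟩
  | tail _ hstep ih =>
    obtain ⟨s1, hpath, hsq⟩ := ih
    obtain ⟨s2, hstep2, hsq2⟩ := sq_step htheta hsq hstep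
    exact ⟨s2, hpath.tail hstep2, hsq2⟩

lemma sq_stable (htheta : ThetaSem Tr theta) {X : Set A} {r s : C} (h : Sq theta X r s) (hr : Stable Tr r) :
    Stable Tr s := by
  rintro ⟨s', hs⟩
  obtain ⟨r', hr', -⟩ := sq_step htheta (sq_symm h) hs
  exact hr ⟨r', hr'⟩

lemma sq_idle (htheta : ThetaSem Tr theta) {X : Set A} {Y : Set A} {r s : C} (h : Sq theta X r s) (hr : Idle Tr r Y) :
    Idle Tr s Y := by
  refine ⟨sq_stable htheta h hr.1, ?_⟩
  rintro a haY ⟨s', hs⟩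
  obtain ⟨r', hr', -⟩ := sq_step htheta (sq_symm h) hs
  exact hr.2 a haY ⟨r', hr'⟩

/-- `Bis` is preserved by the squashing relation on both sides. -/
lemma sq_lift (htheta : ThetaSem Tr theta) {X : Set A} {P1 Q1 P2 Q2 : C}
    (h : Bis Tr P1 Q1) (hp : Sq theta X P1 P2) (hq : Sq theta X Q1 Q2) :
    Bis Tr P2 Q2 := by
  obtain ⟨Rp, Rt, hC, hPQ⟩ := h
  refine ⟨fun p q => ∃ p1 q1, Sq theta X p p1 ∧ Sq theta X q q1 ∧ Rp p1 q1,
         fun p Y q => ∃ p1 q1, Sq theta X p p1 ∧ Sq theta X q q1 ∧ Rt p1 Y q1,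
         ?_, ⟨P1, Q1, sq_symm hp, sq_symm hq, hPQ⟩⟩
  constructor
  · rintro p q ⟨p1, q1, h1, h2, hR⟩
    exact ⟨q1, p1, h2, h1, hC.symm_p hR⟩
  · rintro p Y q ⟨p1, q1, h1, h2, hR⟩
    exact ⟨q1, p1, h2, h1, hC.symm_t hR⟩
  · rintro p q α p' ⟨p1, q1, h1, h2, hR⟩ hα hstep
    obtain ⟨p1', hstep1, hsq1⟩ := sq_step htheta h1 hstep
    obtain ⟨T1, T2, hpath, hopt, hr1, hr2⟩ := hC.c1a hR hα hstep1
    obtain ⟨U1, hupath, husq⟩ := sq_path htheta (sq_symm h2) hpath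
    rcases hopt with ⟨rfl, rfl⟩ | hopt
    · exact ⟨U1, U1, hupath, Or.inl ⟨rfl, rfl⟩,
        ⟨p1, T1, h1, sq_symm husq, hr1⟩, ⟨p1', T1, hsq1, sq_symm husq, hr2⟩⟩
    · obtain ⟨U2, hu2, husq2⟩ := sq_step htheta husq hopt
      exact ⟨U1, U2, hupath, Or.inr hu2,
        ⟨p1, T1, h1, sq_symm husq, hr1⟩, ⟨p1', T2, hsq1, sq_symm husq2, hr2⟩⟩
  · rintro p q Y ⟨p1, q1, h1, h2, hR⟩
    exact ⟨p1, q1, h1, h2, hC.c1b Y hR⟩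
  · rintro p Y q p' ⟨p1, q1, h1, h2, hR⟩ hstep
    obtain ⟨p1', hstep1, hsq1⟩ := sq_step htheta h1 hstep
    obtain ⟨T1, T2, hpath, hopt, hr1, hr2⟩ := hC.c2a hR hstep1
    obtain ⟨U1, hupath, husq⟩ := sq_path htheta (sq_symm h2) hpath
    rcases hopt with ⟨-, rfl⟩ | hopt
    · exact ⟨U1, U1, hupath, Or.inl ⟨rfl, rfl⟩,
        ⟨p1, T1, h1, sq_symm husq, hr1⟩, ⟨p1', T1, hsq1, sq_symm husq, hr2⟩⟩
    · obtain ⟨U2, hu2, husq2⟩ := sq_step htheta husq hopt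
      exact ⟨U1, U2, hupath, Or.inr hu2,
        ⟨p1, T1, h1, sq_symm husq, hr1⟩, ⟨p1', T2, hsq1, sq_symm husq2, hr2⟩⟩
  · rintro p Y q a p' ⟨p1, q1, h1, h2, hR⟩ haY hstep
    obtain ⟨p1', hstep1, hsq1⟩ := sq_step htheta h1 hstep
    obtain ⟨T1, T2, hpath, hvis, hr1, hr2⟩ := hC.c2b hR haY hstep1
    obtain ⟨U1, hupath, husq⟩ := sq_path htheta (sq_symm h2) hpath
    obtain ⟨U2, hu2, husq2⟩ := sq_step htheta husq hvis
    exact ⟨U1, U2, hupath, hu2,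
      ⟨p1, T1, h1, sq_symm husq, hr1⟩, ⟨p1', T2, hsq1, sq_symm husq2, hr2⟩⟩
  · rintro p Y q ⟨p1, q1, h1, h2, hR⟩ hid
    obtain ⟨T0, hpath, hr0⟩ := hC.c2c hR (sq_idle htheta h1 hid)
    obtain ⟨U0, hupath, husq⟩ := sq_path htheta (sq_symm h2) hpath
    exact ⟨U0, hupath, ⟨p1, T0, h1, sq_symm husq, hr0⟩⟩
  · rintro p Y q p' ⟨p1, q1, h1, h2, hR⟩ hid hstep
    obtain ⟨p1', hstep1, hsq1⟩ := sq_step htheta h1 hstep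
    obtain ⟨T1, T2, hpath, hto, hr2⟩ := hC.c2d hR (sq_idle htheta h1 hid) hstep1
    obtain ⟨U1, hupath, husq⟩ := sq_path htheta (sq_symm h2) hpath
    obtain ⟨U2, hu2, husq2⟩ := sq_step htheta husq hto
    exact ⟨U1, U2, hupath, hu2, ⟨p1', T2, hsq1, sq_symm husq2, hr2⟩⟩
  · rintro p Y q ⟨p1, q1, h1, h2, hR⟩ hstab
    obtain ⟨T0, hpath, hstab0⟩ := hC.c2e hR (sq_stable htheta h1 hstab)
    obtain ⟨U0, hupath, husq⟩ := sq_path htheta (sq_symm h2) hpath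
    exact ⟨U0, hupath, sq_stable htheta husq hstab0⟩

end Aux

/-- Soundness of the reactive approximation axiom: if `ψ_X(P) ~r ψ_X(Q)` for every
`X ⊆ A`, then `P ~r Q`. -/
theorem stmt13 {C A : Type} (Tr : C → Act A → C → Prop)
    (theta psi : Set A → C → C)
    (htheta : ThetaSem Tr theta) (hpsi : PsiSem Tr theta psi)
    (P Q : C)
    (h : ∀ X : Set A, RTBis Tr theta (psi X P) (psi X Q)) :
    RTBis Tr theta P Q := by
  refine ⟨fun p q => ∀ X : Set A, RTBis Tr theta (psi X p) (psi X q), ⟨?_, ?_, ?_⟩, h⟩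
  · rintro p q hB X
    obtain ⟨B0, hB0, hpq⟩ := hB X
    exact ⟨B0, hB0, hB0.1 hpq⟩
  · rintro p q α p' hB hα hstep
    obtain ⟨B0, ⟨hs, hc1, hc2⟩, hpq⟩ := hB ∅
    obtain ⟨q'', hq'', hbis⟩ := hc1 hpq hα ((hpsi ∅ p α p').mpr (Or.inl ⟨hα, hstep⟩))
    rcases (hpsi ∅ q α q'').mp hq'' with ⟨-, ht⟩ | ⟨rfl, -⟩
    · exact ⟨q'', ht, hbis⟩
    · exact absurd rfl hα
  · rintro p q X p' hB hid hstep
    obtain ⟨B0, ⟨hs, hc1, hc2⟩, hpq⟩ := hB X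
    have hpt : Tr (psi X p) Act.to (theta X p') :=
      (hpsi X p Act.to (theta X p')).mpr (Or.inr ⟨rfl, hid, p', hstep, rfl⟩)
    have hidp : Idle Tr (psi X p) X := by
      constructor
      · rintro ⟨r, hr⟩
        rcases (hpsi X p Act.tau r).mp hr with ⟨-, htr⟩ | ⟨heq, -⟩
        · exact hid.1 ⟨r, htr⟩
        · cases heq
      · rintro a haX ⟨r, hr⟩
        rcases (hpsi X p (Act.vis a) r).mp hr with ⟨-, htr⟩ | ⟨heq, -⟩
        · exact hid.2 a haX ⟨r, htr⟩
        · cases heq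
    obtain ⟨q'', hq'', hbis⟩ := hc2 X hpq hidp hpt
    rcases (hpsi X q Act.to q'').mp hq'' with ⟨hne, -⟩ | ⟨-, hidq, Q', hQ', rfl⟩
    · exact absurd rfl hne
    · exact ⟨Q', hQ',
        sq_lift htheta hbis (Or.inr (Or.inl ⟨p', rfl, rfl⟩)) (Or.inr (Or.inl ⟨Q', rfl, rfl⟩))⟩
end

section
/- Modal characterisation (soundness direction): if P is concrete branching reactive bisimilar to Q, then for every formula φ in the class L^c_b, P ⊨ φ iff Q ⊨ φ; and if P is concrete branching X-bisimilar to Q then P ⊨_X φ iff Q ⊨_X φ for every φ in L^c_b. -/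
/-- Formulas of the class `L^c_b`: `⊤`, arbitrary conjunctions, negation,
`⟨ε⟩(φ ∧ ⟨α̂⟩φ')` for `α ∈ A ∪ {tau}` (with `none` standing for `tau`),
`⟨ε⟩⟨X⟩φ`, and `⟨ε⟩¬⟨tau⟩⊤`. -/
inductive Fm (A : Type) : Type 1 where
  | top : Fm A
  | conj (I : Type) (f : I → Fm A) : Fm A
  | neg (φ : Fm A) : Fm A
  | dia (a : Option A) (φ φ' : Fm A) : Fm A
  | diaX (X : Set A) (φ : Fm A) : Fm A
  | stab : Fm A

/-- Satisfaction `P ⊨ φ` (environment `none`, i.e. a triggered environment) and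
`P ⊨_Y φ` (environment `some Y`). -/
def Sat {C A : Type} (Tr : C → Act A → C → Prop) :
    Fm A → Option (Set A) → C → Prop
  | .top, _, _ => True
  | .conj _ f, e, P => ∀ i, Sat Tr (f i) e P
  | .neg φ, e, P => ¬ Sat Tr φ e P
  | .dia none φ φ', e, P =>
      ∃ P1, TauPath Tr P P1 ∧ Sat Tr φ e P1 ∧
        (Sat Tr φ' e P1 ∨ ∃ P2, Tr P1 Act.tau P2 ∧ Sat Tr φ' e P2)
  | .dia (some a) φ φ', e, P =>
      ∃ P1 P2, TauPath Tr P P1 ∧ Sat Tr φ e P1 ∧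
        (∀ Y ∈ e, a ∈ Y ∨ Idle Tr P1 Y) ∧
        Tr P1 (Act.vis a) P2 ∧ Sat Tr φ' none P2
  | .diaX X φ, e, P =>
      ∃ P1 P2, TauPath Tr P P1 ∧
        Idle Tr P1 (match e with | none => X | some Y => X ∪ Y) ∧
        Tr P1 Act.to P2 ∧ Sat Tr φ (some X) P2
  | .stab, _, P => ∃ P0, TauPath Tr P P0 ∧ Stable Tr P0

section Aux

variable {C A : Type} {Tr : C → Act A → C → Prop} {Rp : C → C → Prop}
  {Rt : C → Set A → C → Prop}

lemma aux_tauPath_of_stable {p q : C} (hs : Stable Tr p) (hp : TauPath Tr p q) : q = p := by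
  induction hp with
  | refl => rfl
  | tail _ hstep ih => exact absurd ⟨_, ih ▸ hstep⟩ hs

lemma aux_matchA (h : CBRB Tr Rp Rt) {P Q P' : C} (hR : Rp P Q)
    (hp : TauPath Tr P P') : ∃ Q', TauPath Tr Q Q' ∧ Rp P' Q' := by
  induction hp with
  | refl => exact ⟨Q, .refl, hR⟩
  | tail _ hstep ih =>
    obtain ⟨Q1, hQ1, hR1⟩ := ih
    obtain ⟨Q2, Q3, h2, h3, _, hR3⟩ := h.c1a hR1 (fun h => by cases h) hstep
    rcases h3 with ⟨_, rfl⟩ | h3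
    · exact ⟨Q2, hQ1.trans h2, hR3⟩
    · exact ⟨Q3, (hQ1.trans h2).tail h3, hR3⟩

lemma aux_matchB (h : CBRB Tr Rp Rt) {P Q P' : C} {Y : Set A} (hR : Rt P Y Q)
    (hp : TauPath Tr P P') : ∃ Q', TauPath Tr Q Q' ∧ Rt P' Y Q' := by
  induction hp with
  | refl => exact ⟨Q, .refl, hR⟩
  | tail _ hstep ih =>
    obtain ⟨Q1, hQ1, hR1⟩ := ih
    obtain ⟨Q2, Q3, h2, h3, _, hR3⟩ := h.c2a hR1 hstep
    rcases h3 with ⟨_, rfl⟩ | h3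
    · exact ⟨Q2, hQ1.trans h2, hR3⟩
    · exact ⟨Q3, (hQ1.trans h2).tail h3, hR3⟩

lemma aux_backRt (h : CBRB Tr Rp Rt) {Q Q' P : C} {Y : Set A} (hR : Rt Q Y P)
    (hp : TauPath Tr Q Q') (hs : Stable Tr P) : Rt Q' Y P := by
  induction hp with
  | refl => exact hR
  | tail _ hstep ih =>
    obtain ⟨P1, P2, h1, h2, _, hR2⟩ := h.c2a ih hstep
    have e1 : P1 = P := aux_tauPath_of_stable hs h1
    rcases h2 with ⟨_, rfl⟩ | h2
    · exact e1 ▸ hR2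
    · exact absurd ⟨_, e1 ▸ h2⟩ hs

lemma aux_lemD (h : CBRB Tr Rp Rt) {P Q : C} {Y : Set A} (hR : Rt P Y Q)
    (hI : Idle Tr P Y) :
    ∃ Q0, TauPath Tr Q Q0 ∧ Rp P Q0 ∧ Stable Tr Q0 ∧
      ∀ a, (¬ ∃ p', Tr P (Act.vis a) p') → ¬ ∃ q', Tr Q0 (Act.vis a) q' := by
  obtain ⟨Q0, hQ0, hs0⟩ := h.c2e hR hI.1
  have hR0 : Rt P Y Q0 := h.symm_t (aux_backRt h (h.symm_t hR) hQ0 hI.1)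
  obtain ⟨Q1, hQ1, hRp⟩ := h.c2c hR0 hI
  have e : Q1 = Q0 := aux_tauPath_of_stable hs0 hQ1
  subst e
  refine ⟨Q1, hQ0, hRp, hs0, ?_⟩
  rintro a hna ⟨q', hq'⟩
  obtain ⟨P1, P2, h1, h2, _, _⟩ := h.c1a (h.symm_p hRp) (fun h => by cases h) hq'
  have e1 : P1 = P := aux_tauPath_of_stable hI.1 h1
  rcases h2 with ⟨hcontra, _⟩ | h2
  · cases hcontra
  · exact hna ⟨P2, e1 ▸ h2⟩

lemma aux_main (h : CBRB Tr Rp Rt) (φ : Fm A) :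
    (∀ P Q, Rp P Q → Sat Tr φ none P → Sat Tr φ none Q) ∧
    (∀ P (X : Set A) Q, Rt P X Q → Sat Tr φ (some X) P → Sat Tr φ (some X) Q) := by
  induction φ with
  | top => exact ⟨fun _ _ _ _ => trivial, fun _ _ _ _ _ => trivial⟩
  | conj I f ih =>
    exact ⟨fun P Q hR hs i => (ih i).1 P Q hR (hs i),
           fun P X Q hR hs i => (ih i).2 P X Q hR (hs i)⟩
  | neg φ ih =>
    exact ⟨fun P Q hR hs hc => hs (ih.1 Q P (h.symm_p hR) hc),
           fun P X Q hR hs hc => hs (ih.2 Q X P (h.symm_t hR) hc)⟩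
  | dia a φ φ' ih ih' =>
    cases a with
    | none =>
      constructor
      · rintro P Q hR ⟨P1, hp, hφ, hrest⟩
        obtain ⟨Q1, hq, hR1⟩ := aux_matchA h hR hp
        rcases hrest with hφ' | ⟨P2, hstep, hφ'⟩
        · exact ⟨Q1, hq, ih.1 _ _ hR1 hφ, Or.inl (ih'.1 _ _ hR1 hφ')⟩
        · obtain ⟨Q2, Q3, h2, h3, hR2, hR3⟩ := h.c1a hR1 (fun h => by cases h) hstep
          rcases h3 with ⟨_, rfl⟩ | h3
          · exact ⟨Q2, hq.trans h2, ih.1 _ _ hR2 hφ, Or.inl (ih'.1 _ _ hR3 hφ')⟩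
          · exact ⟨Q2, hq.trans h2, ih.1 _ _ hR2 hφ, Or.inr ⟨Q3, h3, ih'.1 _ _ hR3 hφ'⟩⟩
      · rintro P X Q hR ⟨P1, hp, hφ, hrest⟩
        obtain ⟨Q1, hq, hR1⟩ := aux_matchB h hR hp
        rcases hrest with hφ' | ⟨P2, hstep, hφ'⟩
        · exact ⟨Q1, hq, ih.2 _ _ _ hR1 hφ, Or.inl (ih'.2 _ _ _ hR1 hφ')⟩
        · obtain ⟨Q2, Q3, h2, h3, hR2, hR3⟩ := h.c2a hR1 hstep
          rcases h3 with ⟨_, rfl⟩ | h3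
          · exact ⟨Q2, hq.trans h2, ih.2 _ _ _ hR2 hφ, Or.inl (ih'.2 _ _ _ hR3 hφ')⟩
          · exact ⟨Q2, hq.trans h2, ih.2 _ _ _ hR2 hφ,
              Or.inr ⟨Q3, h3, ih'.2 _ _ _ hR3 hφ'⟩⟩
    | some a =>
      constructor
      · rintro P Q hR ⟨P1, P2, hp, hφ, _, hstep, hφ'⟩
        obtain ⟨Q1, hq, hR1⟩ := aux_matchA h hR hp
        obtain ⟨Q2, Q3, h2, h3, hR2, hR3⟩ := h.c1a hR1 (fun h => by cases h) hstep
        rcases h3 with ⟨hcontra, _⟩ | h3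
        · cases hcontra
        · exact ⟨Q2, Q3, hq.trans h2, ih.1 _ _ hR2 hφ, fun Y hY => absurd hY (Option.not_mem_none Y),
            h3, ih'.1 _ _ hR3 hφ'⟩
      · rintro P X Q hR ⟨P1, P2, hp, hφ, hside, hstep, hφ'⟩
        obtain ⟨Q1, hq, hR1⟩ := aux_matchB h hR hp
        rcases hside X rfl with haX | hI
        · obtain ⟨Q2, Q3, h2, h3, hR2, hR3⟩ := h.c2b hR1 haX hstep
          exact ⟨Q2, Q3, hq.trans h2, ih.2 _ _ _ hR2 hφ,
            fun Z hZ => by injection hZ with e; subst e; exact Or.inl haX,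
            h3, ih'.1 _ _ hR3 hφ'⟩
        · obtain ⟨Q0, hq0, hRp, hs0, href⟩ := aux_lemD h hR1 hI
          have hI0 : Idle Tr Q0 X := ⟨hs0, fun b hb => href b (hI.2 b hb)⟩
          obtain ⟨Q2, Q3, h2, h3, hR2, hR3⟩ := h.c1a hRp (fun h => by cases h) hstep
          have e : Q2 = Q0 := aux_tauPath_of_stable hs0 h2
          rcases h3 with ⟨hcontra, _⟩ | h3
          · cases hcontra
          · exact ⟨Q0, Q3, hq.trans hq0, ih.2 _ _ _ (h.c1b X hRp) hφ,
              fun Z hZ => by injection hZ with e'; subst e'; exact Or.inr hI0,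
              e ▸ h3, ih'.1 _ _ hR3 hφ'⟩
  | diaX X φ ih =>
    constructor
    · rintro P Q hR ⟨P1, P2, hp, hI, hstep, hφ⟩
      obtain ⟨Q1, hq, hR1⟩ := aux_matchA h hR hp
      obtain ⟨Q0, hq0, hRp, hs0, href⟩ := aux_lemD h (h.c1b X hR1) hI
      have hI0 : Idle Tr Q0 X := ⟨hs0, fun b hb => href b (hI.2 b hb)⟩
      obtain ⟨Q2, Q3, h2, h3, hR3⟩ := h.c2d (h.c1b X hRp) hI hstep
      have e : Q2 = Q0 := aux_tauPath_of_stable hs0 h2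
      exact ⟨Q0, Q3, hq.trans hq0, hI0, e ▸ h3, ih.2 _ _ _ hR3 hφ⟩
    · rintro P Y Q hR ⟨P1, P2, hp, hI, hstep, hφ⟩
      obtain ⟨Q1, hq, hR1⟩ := aux_matchB h hR hp
      have hIY : Idle Tr P1 Y := ⟨hI.1, fun b hb => hI.2 b (Set.mem_union_right X hb)⟩
      obtain ⟨Q0, hq0, hRp, hs0, href⟩ := aux_lemD h hR1 hIY
      have hI0 : Idle Tr Q0 (X ∪ Y) := ⟨hs0, fun b hb => href b (hI.2 b hb)⟩
      have hIX : Idle Tr P1 X := ⟨hI.1, fun b hb => hI.2 b (Set.mem_union_left Y hb)⟩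
      obtain ⟨Q2, Q3, h2, h3, hR3⟩ := h.c2d (h.c1b X hRp) hIX hstep
      have e : Q2 = Q0 := aux_tauPath_of_stable hs0 h2
      exact ⟨Q0, Q3, hq.trans hq0, hI0, e ▸ h3, ih.2 _ _ _ hR3 hφ⟩
  | stab =>
    constructor
    · rintro P Q hR ⟨P0, hp, hs⟩
      obtain ⟨Q1, hq, hR1⟩ := aux_matchA h hR hp
      obtain ⟨Q0, hq0, hs0⟩ := h.c2e (h.c1b ∅ hR1) hs
      exact ⟨Q0, hq.trans hq0, hs0⟩
    · rintro P X Q hR ⟨P0, hp, hs⟩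
      obtain ⟨Q1, hq, hR1⟩ := aux_matchB h hR hp
      obtain ⟨Q0, hq0, hs0⟩ := h.c2e hR1 hs
      exact ⟨Q0, hq.trans hq0, hs0⟩

end Aux

/-- Modal characterisation, soundness direction: bisimilar processes satisfy the same
formulas of `L^c_b`. -/
theorem stmt15 {C A : Type} (Tr : C → Act A → C → Prop) :
    (∀ P Q : C, Bis Tr P Q → ∀ φ : Fm A, (Sat Tr φ none P ↔ Sat Tr φ none Q)) ∧
    (∀ (P : C) (X : Set A) (Q : C), BisX Tr P X Q →
      ∀ φ : Fm A, (Sat Tr φ (some X) P ↔ Sat Tr φ (some X) Q)) := by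
  constructor
  · rintro P Q ⟨Rp, Rt, hC, hR⟩ φ
    exact ⟨(aux_main hC φ).1 P Q hR, (aux_main hC φ).1 Q P (hC.symm_p hR)⟩
  · rintro P X Q ⟨Rp, Rt, hC, hR⟩ φ
    exact ⟨(aux_main hC φ).2 P X Q hR, (aux_main hC φ).2 Q X P (hC.symm_t hR)⟩
end

section
/- Modal characterisation (completeness direction): if the LTS is image-finite-enough for the logic to distinguish classes (formally: the logic L^c_b is closed under arbitrary conjunction and negation), then the relation ≡ := {(P,Q) | ∀φ ∈ L^c_b, P ⊨ φ ⇔ Q ⊨ φ} ∪ {(P,X,Q) | ∀φ ∈ L^c_b, P ⊨_X φ ⇔ Q ⊨_X φ} is a generalised concrete branching reactive bisimulation; hence logical equivalence with respect to L^c_b implies concrete branching reactive bisimilarity. -/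
structure GCBRB {S A : Type} (Tr : S → Act A → S → Prop)
    (Rp : S → S → Prop) (Rt : S → Set A → S → Prop) : Prop where
  symm_p : ∀ {P Q}, Rp P Q → Rp Q P
  symm_t : ∀ {P X Q}, Rt P X Q → Rt Q X P
  g1a : ∀ {P Q α P'}, Rp P Q → α ≠ Act.to → Tr P α P' →
    ∃ Q1 Q2, TauPath Tr Q Q1 ∧ OptStep Tr α Q1 Q2 ∧ Rp P Q1 ∧ Rp P' Q2
  g1b : ∀ {P Q X P'}, Rp P Q → Idle Tr P X → Tr P Act.to P' →
    ∃ Q1 Q2, TauPath Tr Q Q1 ∧ Tr Q1 Act.to Q2 ∧ Rt P' X Q2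
  g1c : ∀ {P Q}, Rp P Q → Stable Tr P → ∃ Q0, TauPath Tr Q Q0 ∧ Stable Tr Q0
  g2a : ∀ {P X Q P'}, Rt P X Q → Tr P Act.tau P' →
    ∃ Q1 Q2, TauPath Tr Q Q1 ∧ OptStep Tr Act.tau Q1 Q2 ∧ Rt P X Q1 ∧ Rt P' X Q2
  g2b : ∀ {P X Q a P'}, Rt P X Q → (a ∈ X ∨ Idle Tr P X) → Tr P (Act.vis a) P' →
    ∃ Q1 Q2, TauPath Tr Q Q1 ∧ Tr Q1 (Act.vis a) Q2 ∧ Rt P X Q1 ∧ Rp P' Q2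
  g2c : ∀ {P X Q P'} (Y : Set A), Rt P X Q → Idle Tr P (X ∪ Y) → Tr P Act.to P' →
    ∃ Q1 Q2, TauPath Tr Q Q1 ∧ Tr Q1 Act.to Q2 ∧ Rt P' Y Q2
  g2d : ∀ {P X Q}, Rt P X Q → Stable Tr P → ∃ Q0, TauPath Tr Q Q0 ∧ Stable Tr Q0

section Aux

open Classical

variable {C A : Type} (Tr : C → Act A → C → Prop)

/-- Extract a distinguishing formula satisfied on the left. -/
lemma dist {e : Option (Set A)} {P Q : C}
    (h : ¬ ∀ φ : Fm A, Sat Tr φ e P ↔ Sat Tr φ e Q) :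
    ∃ φ : Fm A, Sat Tr φ e P ∧ ¬ Sat Tr φ e Q := by
  by_contra hc
  push_neg at hc
  apply h
  intro φ
  refine ⟨hc φ, fun hQ => by_contra fun hP => ?_⟩
  have h1 : Sat Tr (Fm.neg φ) e Q := hc (Fm.neg φ) hP
  exact h1 hQ

lemma stable_taupath {P P1 : C} (hs : Stable Tr P) (h : TauPath Tr P P1) : P = P1 := by
  rcases (Relation.ReflTransGen.cases_head h) with rfl | ⟨c, hc, _⟩
  · rfl
  · exact absurd ⟨c, hc⟩ hs

lemma stable_optstep {P P2 : C} (hs : Stable Tr P) (h : OptStep Tr Act.tau P P2) : P = P2 := by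
  rcases h with ⟨_, rfl⟩ | h
  · rfl
  · exact absurd ⟨P2, h⟩ hs

/-- tau-step matching for the logical-equivalence relations. -/
lemma tau_case (e : Option (Set A)) {P Q P' : C}
    (h : ∀ φ : Fm A, Sat Tr φ e P ↔ Sat Tr φ e Q) (hstep : Tr P Act.tau P') :
    ∃ Q1 Q2, TauPath Tr Q Q1 ∧ OptStep Tr Act.tau Q1 Q2 ∧
      (∀ φ : Fm A, Sat Tr φ e P ↔ Sat Tr φ e Q1) ∧
      (∀ φ : Fm A, Sat Tr φ e P' ↔ Sat Tr φ e Q2) := by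
  by_contra hcon
  have hcon : ∀ Q1 Q2, TauPath Tr Q Q1 → OptStep Tr Act.tau Q1 Q2 →
      (∀ φ : Fm A, Sat Tr φ e P ↔ Sat Tr φ e Q1) →
      ¬ ∀ φ : Fm A, Sat Tr φ e P' ↔ Sat Tr φ e Q2 :=
    fun Q1 Q2 hp ho h1 h2 => hcon ⟨Q1, Q2, hp, ho, h1, h2⟩
  set I := {pq : C × C // TauPath Tr Q pq.1 ∧ OptStep Tr Act.tau pq.1 pq.2} with hI
  have hch : ∀ p : I, ∃ fg : Fm A × Fm A, Sat Tr fg.1 e P ∧ Sat Tr fg.2 e P' ∧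
      ¬ (Sat Tr fg.1 e p.1.1 ∧ Sat Tr fg.2 e p.1.2) := by
    rintro ⟨⟨Q1, Q2⟩, hpath, hopt⟩
    by_cases h1 : ∀ φ : Fm A, Sat Tr φ e P ↔ Sat Tr φ e Q1
    · have h2 := hcon Q1 Q2 hpath hopt h1
      obtain ⟨φ, hφP, hφQ⟩ := dist Tr h2
      exact ⟨(Fm.top, φ), trivial, hφP, fun hc => hφQ hc.2⟩
    · obtain ⟨φ, hφP, hφQ⟩ := dist Tr h1
      exact ⟨(φ, Fm.top), hφP, trivial, fun hc => hφQ hc.1⟩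
  choose F hF1 hF2 hF3 using hch
  have hΦ : Sat Tr (Fm.dia none (Fm.conj I (fun p => (F p).1)) (Fm.conj I (fun p => (F p).2))) e P :=
    ⟨P, Relation.ReflTransGen.refl, hF1, Or.inr ⟨P', hstep, hF2⟩⟩
  rw [h] at hΦ
  obtain ⟨Q1, hpath, hc1, hrest⟩ := hΦ
  rcases hrest with hc2 | ⟨Q2, hstep2, hc2⟩
  · exact hF3 ⟨(Q1, Q1), hpath, Or.inl ⟨rfl, rfl⟩⟩ ⟨hc1 _, hc2 _⟩
  · exact hF3 ⟨(Q1, Q2), hpath, Or.inr hstep2⟩ ⟨hc1 _, hc2 _⟩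

/-- visible-step matching. -/
lemma vis_case (e : Option (Set A)) {P Q P' : C} {a : A}
    (h : ∀ φ : Fm A, Sat Tr φ e P ↔ Sat Tr φ e Q) (hstep : Tr P (Act.vis a) P')
    (hcond : ∀ Y ∈ e, a ∈ Y ∨ Idle Tr P Y) :
    ∃ Q1 Q2, TauPath Tr Q Q1 ∧ Tr Q1 (Act.vis a) Q2 ∧
      (∀ φ : Fm A, Sat Tr φ e P ↔ Sat Tr φ e Q1) ∧
      (∀ φ : Fm A, Sat Tr φ none P' ↔ Sat Tr φ none Q2) := by
  by_contra hcon
  have hcon : ∀ Q1 Q2, TauPath Tr Q Q1 → Tr Q1 (Act.vis a) Q2 →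
      (∀ φ : Fm A, Sat Tr φ e P ↔ Sat Tr φ e Q1) →
      ¬ ∀ φ : Fm A, Sat Tr φ none P' ↔ Sat Tr φ none Q2 :=
    fun Q1 Q2 hp hs h1 h2 => hcon ⟨Q1, Q2, hp, hs, h1, h2⟩
  set I := {pq : C × C // TauPath Tr Q pq.1 ∧ Tr pq.1 (Act.vis a) pq.2} with hI
  have hch : ∀ p : I, ∃ fg : Fm A × Fm A, Sat Tr fg.1 e P ∧ Sat Tr fg.2 none P' ∧
      ¬ (Sat Tr fg.1 e p.1.1 ∧ Sat Tr fg.2 none p.1.2) := by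
    rintro ⟨⟨Q1, Q2⟩, hpath, hst⟩
    by_cases h1 : ∀ φ : Fm A, Sat Tr φ e P ↔ Sat Tr φ e Q1
    · have h2 := hcon Q1 Q2 hpath hst h1
      obtain ⟨φ, hφP, hφQ⟩ := dist Tr h2
      exact ⟨(Fm.top, φ), trivial, hφP, fun hc => hφQ hc.2⟩
    · obtain ⟨φ, hφP, hφQ⟩ := dist Tr h1
      exact ⟨(φ, Fm.top), hφP, trivial, fun hc => hφQ hc.1⟩
  choose F hF1 hF2 hF3 using hch
  have hΦ : Sat Tr (Fm.dia (some a) (Fm.conj I (fun p => (F p).1)) (Fm.conj I (fun p => (F p).2))) e P :=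
    ⟨P, P', Relation.ReflTransGen.refl, hF1, hcond, hstep, hF2⟩
  rw [h] at hΦ
  obtain ⟨Q1, Q2, hpath, hc1, _, hstep2, hc2⟩ := hΦ
  exact hF3 ⟨(Q1, Q2), hpath, hstep2⟩ ⟨hc1 _, hc2 _⟩

/-- timeout-step matching. -/
lemma to_case (e : Option (Set A)) (X : Set A) {P Q P' : C}
    (h : ∀ φ : Fm A, Sat Tr φ e P ↔ Sat Tr φ e Q)
    (hidle : Idle Tr P (Option.elim e X (fun Y => X ∪ Y)))
    (hstep : Tr P Act.to P') :
    ∃ Q1 Q2, TauPath Tr Q Q1 ∧ Tr Q1 Act.to Q2 ∧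
      (∀ φ : Fm A, Sat Tr φ (some X) P' ↔ Sat Tr φ (some X) Q2) := by
  by_contra hcon
  have hcon : ∀ Q1 Q2, TauPath Tr Q Q1 → Tr Q1 Act.to Q2 →
      ¬ ∀ φ : Fm A, Sat Tr φ (some X) P' ↔ Sat Tr φ (some X) Q2 :=
    fun Q1 Q2 hp hs h2 => hcon ⟨Q1, Q2, hp, hs, h2⟩
  set I := {pq : C × C // TauPath Tr Q pq.1 ∧ Tr pq.1 Act.to pq.2} with hI
  have hch : ∀ p : I, ∃ φ : Fm A, Sat Tr φ (some X) P' ∧ ¬ Sat Tr φ (some X) p.1.2 := by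
    rintro ⟨⟨Q1, Q2⟩, hpath, hst⟩
    exact dist Tr (hcon Q1 Q2 hpath hst)
  choose F hF1 hF2 using hch
  have hΦ : Sat Tr (Fm.diaX X (Fm.conj I F)) e P := by
    cases e with
    | none => exact ⟨P, P', Relation.ReflTransGen.refl, hidle, hstep, hF1⟩
    | some Y => exact ⟨P, P', Relation.ReflTransGen.refl, hidle, hstep, hF1⟩
  rw [h] at hΦ
  obtain ⟨Q1, Q2, hpath, _, hstep2, hc⟩ := hΦ
  exact hF2 ⟨(Q1, Q2), hpath, hstep2⟩ (hc _)

/-- stability matching. -/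
lemma stab_case (e : Option (Set A)) {P Q : C}
    (h : ∀ φ : Fm A, Sat Tr φ e P ↔ Sat Tr φ e Q) (hs : Stable Tr P) :
    ∃ Q0, TauPath Tr Q Q0 ∧ Stable Tr Q0 := by
  have hΦ : Sat Tr Fm.stab e P := ⟨P, Relation.ReflTransGen.refl, hs⟩
  rw [h] at hΦ
  exact hΦ

/-- GCBRB gives rise to a CBRB. -/
lemma gcbrb_to_cbrb {Rp : C → C → Prop} {Rt : C → Set A → C → Prop}
    (hG : GCBRB Tr Rp Rt) :
    CBRB Tr
      (fun P Q => Rp P Q ∨ ∃ X, Rt P X Q ∧ Idle Tr P X ∧ Idle Tr Q X)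
      (fun P X Q => Rt P X Q ∨ Rp P Q ∨ ∃ X', Rt P X' Q ∧ Idle Tr P X' ∧ Idle Tr Q X') := by
  set Rp' : C → C → Prop := fun P Q => Rp P Q ∨ ∃ X, Rt P X Q ∧ Idle Tr P X ∧ Idle Tr Q X with hRp'
  -- propagation of triples along tau paths from the right when left is stable
  have prop : ∀ {P X Q Q0}, Rt P X Q → Stable Tr P → TauPath Tr Q Q0 → Rt P X Q0 := by
    intro P X Q Q0 hR hs hpath
    induction hpath with
    | refl => exact hR
    | tail h1 h2 ih =>
      rename_i b c
      obtain ⟨P1, P2, hp, ho, _, hR2⟩ := hG.g2a (hG.symm_t ih) h2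
      rw [← stable_taupath Tr hs hp] at ho
      rw [← stable_optstep Tr hs ho] at hR2
      exact hG.symm_t hR2
  -- a stable partner of an X-idle state is X-idle
  have idle_of : ∀ {P X Q}, Rt P X Q → Idle Tr P X → Stable Tr Q → Idle Tr Q X := by
    intro P X Q hR hidle hsQ
    refine ⟨hsQ, fun b hb hex => ?_⟩
    obtain ⟨Q', hQ'⟩ := hex
    obtain ⟨P1, P2, hp, hst, _, _⟩ := hG.g2b (hG.symm_t hR) (Or.inl hb) hQ'
    rw [← stable_taupath Tr hidle.1 hp] at hst
    exact hidle.2 b hb ⟨P2, hst⟩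
  constructor
  · -- symm_p
    rintro P Q (h | ⟨X, h, h1, h2⟩)
    · exact Or.inl (hG.symm_p h)
    · exact Or.inr ⟨X, hG.symm_t h, h2, h1⟩
  · -- symm_t
    rintro P X Q (h | h | ⟨X', h, h1, h2⟩)
    · exact Or.inl (hG.symm_t h)
    · exact Or.inr (Or.inl (hG.symm_p h))
    · exact Or.inr (Or.inr ⟨X', hG.symm_t h, h2, h1⟩)
  · -- c1a
    rintro P Q α P' (h | ⟨X, h, h1, h2⟩) hα hstep
    · obtain ⟨Q1, Q2, hp, ho, hr1, hr2⟩ := hG.g1a h hα hstep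
      exact ⟨Q1, Q2, hp, ho, Or.inl hr1, Or.inl hr2⟩
    · rcases α with a | _ | _
      · -- visible action
        by_cases ha : a ∈ X
        · exact absurd ⟨P', hstep⟩ (h1.2 a ha)
        · obtain ⟨Q1, Q2, hp, hst, hr1, hr2⟩ := hG.g2b h (Or.inr h1) hstep
          have hQ1 : Q = Q1 := stable_taupath Tr h2.1 hp
          subst hQ1
          exact ⟨Q, Q2, Relation.ReflTransGen.refl, Or.inr hst,
            Or.inr ⟨X, h, h1, h2⟩, Or.inl hr2⟩
      · exact absurd ⟨P', hstep⟩ h1.1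
      · exact absurd rfl hα
  · -- c1b
    rintro P Q Y (h | h)
    · exact Or.inr (Or.inl h)
    · exact Or.inr (Or.inr h)
  · -- c2a
    rintro P X Q P' (h | h | ⟨X', h, h1, h2⟩) hstep
    · obtain ⟨Q1, Q2, hp, ho, hr1, hr2⟩ := hG.g2a h hstep
      exact ⟨Q1, Q2, hp, ho, Or.inl hr1, Or.inl hr2⟩
    · obtain ⟨Q1, Q2, hp, ho, hr1, hr2⟩ := hG.g1a h (by simp) hstep
      exact ⟨Q1, Q2, hp, ho, Or.inr (Or.inl hr1), Or.inr (Or.inl hr2)⟩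
    · exact absurd ⟨P', hstep⟩ h1.1
  · -- c2b
    rintro P X Q a P' (h | h | ⟨X', h, h1, h2⟩) ha hstep
    · obtain ⟨Q1, Q2, hp, hst, hr1, hr2⟩ := hG.g2b h (Or.inl ha) hstep
      exact ⟨Q1, Q2, hp, hst, Or.inl hr1, Or.inl hr2⟩
    · obtain ⟨Q1, Q2, hp, ho, hr1, hr2⟩ := hG.g1a h (by simp) hstep
      rcases ho with ⟨hc, _⟩ | hst
      · exact absurd hc (by simp)
      · exact ⟨Q1, Q2, hp, hst, Or.inr (Or.inl hr1), Or.inl hr2⟩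
    · by_cases ha' : a ∈ X'
      · exact absurd ⟨P', hstep⟩ (h1.2 a ha')
      · obtain ⟨Q1, Q2, hp, hst, hr1, hr2⟩ := hG.g2b h (Or.inr h1) hstep
        have hQ1 : Q = Q1 := stable_taupath Tr h2.1 hp
        subst hQ1
        exact ⟨Q, Q2, Relation.ReflTransGen.refl, hst,
          Or.inr (Or.inr ⟨X', h, h1, h2⟩), Or.inl hr2⟩
  · -- c2c
    rintro P X Q (h | h | ⟨X', h, h1, h2⟩) hidle
    · obtain ⟨Q0, hp, hsQ0⟩ := hG.g2d h hidle.1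
      have hR0 : Rt P X Q0 := prop h hidle.1 hp
      exact ⟨Q0, hp, Or.inr ⟨X, hR0, hidle, idle_of hR0 hidle hsQ0⟩⟩
    · exact ⟨Q, Relation.ReflTransGen.refl, Or.inl h⟩
    · exact ⟨Q, Relation.ReflTransGen.refl, Or.inr ⟨X', h, h1, h2⟩⟩
  · -- c2d
    rintro P X Q P' (h | h | ⟨X', h, h1, h2⟩) hidle hstep
    · obtain ⟨Q1, Q2, hp, hst, hr⟩ := hG.g2c X h ⟨hidle.1, fun b hb => by
        rcases hb with hb | hb
        · exact hidle.2 b hb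
        · exact hidle.2 b hb⟩ hstep
      exact ⟨Q1, Q2, hp, hst, Or.inl hr⟩
    · obtain ⟨Q1, Q2, hp, hst, hr⟩ := hG.g1b h hidle hstep
      exact ⟨Q1, Q2, hp, hst, Or.inl hr⟩
    · obtain ⟨Q1, Q2, hp, hst, hr⟩ := hG.g2c X h ⟨hidle.1, fun b hb => by
        rcases hb with hb | hb
        · exact h1.2 b hb
        · exact hidle.2 b hb⟩ hstep
      exact ⟨Q1, Q2, hp, hst, Or.inl hr⟩
  · -- c2e
    rintro P X Q (h | h | ⟨X', h, h1, h2⟩) hs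
    · exact hG.g2d h hs
    · exact hG.g1c h hs
    · exact ⟨Q, Relation.ReflTransGen.refl, h2.1⟩

end Aux

/-- Modal characterisation, completeness direction: logical equivalence with respect to
`L^c_b` forms a generalised concrete branching reactive bisimulation; hence it implies
concrete branching reactive bisimilarity. -/

theorem stmt16 {C A : Type} (Tr : C → Act A → C → Prop) :
    GCBRB Tr
      (fun P Q => ∀ φ : Fm A, Sat Tr φ none P ↔ Sat Tr φ none Q)
      (fun P X Q => ∀ φ : Fm A, Sat Tr φ (some X) P ↔ Sat Tr φ (some X) Q) ∧
    (∀ P Q : C, (∀ φ : Fm A, Sat Tr φ none P ↔ Sat Tr φ none Q) → Bis Tr P Q) := by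
  have hG : GCBRB Tr
      (fun P Q => ∀ φ : Fm A, Sat Tr φ none P ↔ Sat Tr φ none Q)
      (fun P X Q => ∀ φ : Fm A, Sat Tr φ (some X) P ↔ Sat Tr φ (some X) Q) := by
    constructor
    · exact fun h φ => (h φ).symm
    · exact fun h φ => (h φ).symm
    · -- g1a
      intro P Q α P' h hα hstep
      rcases α with a | _ | _
      · obtain ⟨Q1, Q2, hp, hst, h1, h2⟩ := vis_case Tr none h hstep (by intro Y hY; simp at hY)
        exact ⟨Q1, Q2, hp, Or.inr hst, h1, h2⟩
      · exact tau_case Tr none h hstep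
      · exact absurd rfl hα
    · -- g1b
      intro P Q X P' h hidle hstep
      exact to_case Tr none X h hidle hstep
    · -- g1c
      intro P Q h hs
      exact stab_case Tr none h hs
    · -- g2a
      intro P X Q P' h hstep
      exact tau_case Tr (some X) h hstep
    · -- g2b
      intro P X Q a P' h ha hstep
      refine vis_case Tr (some X) h hstep ?_
      intro Y hY
      have hYX : X = Y := by simpa using hY
      subst hYX
      exact ha
    · -- g2c
      intro P X Q P' Y h hidle hstep
      refine to_case Tr (some X) Y h ?_ hstep
      simpa [Set.union_comm] using hidle
    · -- g2d
      intro P X Q h hs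
      exact stab_case Tr (some X) h hs
  refine ⟨hG, fun P Q h => ?_⟩
  exact ⟨_, _, gcbrb_to_cbrb Tr hG, Or.inl h⟩
end
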